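/- arXiv:2405.18962 — 6 statements merged into one kernel-verified Lean document; each statement's English description precedes it below -/
import Mathlib

section
/- Suppose matrices H, G, Φ, Ψ, J satisfy H = Φ J and G = Ψ J with rowspace(Ψ) ⊆ rowspace(Φ). Then rank H − rank G ≤ rank Φ − rank Ψ. Equivalently: rank(ΦJ) − rank(ΨJ) ≤ rank Φ − rank Ψ whenever the row space of Ψ is contained in that of Φ. -/
open Matrix
noncomputable section

open Module in
lemma key_rank_nullity {c d : ℕ} (f : (Fin c → ℝ) →ₗ[ℝ] (Fin d → ℝ))
    (P : Submodule ℝ (Fin c → ℝ)) :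
    finrank ℝ (P.map f) + finrank ℝ (P ⊓ LinearMap.ker f : Submodule ℝ _) = finrank ℝ P := by
  have h1 := LinearMap.finrank_range_add_finrank_ker (f.domRestrict P)
  rw [LinearMap.range_domRestrict] at h1
  have h2 : finrank ℝ (LinearMap.ker (f.domRestrict P)) =
      finrank ℝ (P ⊓ LinearMap.ker f : Submodule ℝ _) := by
    rw [LinearMap.ker_domRestrict]
    rw [← Submodule.map_comap_subtype P (LinearMap.ker f)]
    exact (Submodule.equivMapOfInjective _ P.injective_subtype _).finrank_eq
  omega

lemma rowSpace_mul {a c d : ℕ} (M : Matrix (Fin a) (Fin c) ℝ) (J : Matrix (Fin c) (Fin d) ℝ) :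
    Submodule.span ℝ (Set.range (M * J).row) =
      (Submodule.span ℝ (Set.range M.row)).map J.vecMulLinear := by
  rw [Submodule.map_span, ← Set.range_comp]
  exact congrArg (Submodule.span ℝ) (congrArg Set.range (funext fun i => funext fun j => by
    show _ = (J.vecMulLinear (M i)) j
    simp [Matrix.mul_apply, Matrix.vecMul, dotProduct, Matrix.row, mul_comm]))

/-- The row space of a matrix: the span of its rows. -/
def rowSpace {ι κ : Type*} (M : Matrix ι κ ℝ) : Submodule ℝ (κ → ℝ) :=
  Submodule.span ℝ (Set.range fun i => M i)

theorem stmt6 {a b c d : ℕ}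
    (Φ : Matrix (Fin a) (Fin c) ℝ) (Ψ : Matrix (Fin b) (Fin c) ℝ)
    (J : Matrix (Fin c) (Fin d) ℝ)
    (h : rowSpace Ψ ≤ rowSpace Φ) :
    ((Φ * J).rank : ℤ) - ((Ψ * J).rank : ℤ) ≤ (Φ.rank : ℤ) - (Ψ.rank : ℤ) := by
  have hΦ : rowSpace Φ = Submodule.span ℝ (Set.range Φ.row) := rfl
  have hΨ : rowSpace Ψ = Submodule.span ℝ (Set.range Ψ.row) := rfl
  rw [hΦ, hΨ] at h
  rw [Matrix.rank_eq_finrank_span_row (Φ * J), Matrix.rank_eq_finrank_span_row (Ψ * J),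
    Matrix.rank_eq_finrank_span_row Φ, Matrix.rank_eq_finrank_span_row Ψ,
    rowSpace_mul, rowSpace_mul]
  have k1 := key_rank_nullity J.vecMulLinear (Submodule.span ℝ (Set.range Φ.row))
  have k2 := key_rank_nullity J.vecMulLinear (Submodule.span ℝ (Set.range Ψ.row))
  have hm : Module.finrank ℝ (Submodule.span ℝ (Set.range Ψ.row) ⊓ LinearMap.ker J.vecMulLinear :
      Submodule ℝ _) ≤
      Module.finrank ℝ (Submodule.span ℝ (Set.range Φ.row) ⊓ LinearMap.ker J.vecMulLinear :
      Submodule ℝ _) :=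
    Submodule.finrank_mono (inf_le_inf_right _ h)
  omega
end
end

section
/- Let (u,y) be input-output data of length T explained by a state-space system (A,B,C,D) with state sequence x, i.e., x_{t+1} = A x_t + B u_t and y_t = C x_t + D u_t for t ∈ [0,T−1]. For k ∈ [0,T−1] define J_k(x) = [x_{[0,T−k−1]} ; H_k(u)] (state row block stacked over the depth-(k+1) input Hankel matrix). If (C,A) is observable and k ≥ max(ℓ(C,A)−1, 0), then rank J_k(x) = rank H_k, where H_k is the depth-(k+1) Hankel matrix of the combined data (u;y). -/
open Matrix
noncomputable section

/-- `obsMat A C k` is the observability matrix Ω_k, the stack of C, CA, ..., CA^k. -/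
def obsMat {ι : Type*} [Fintype ι] [DecidableEq ι] {p : ℕ}
    (A : Matrix ι ι ℝ) (C : Matrix (Fin p) ι ℝ) (k : ℕ) :
    Matrix (Fin (k + 1) × Fin p) ι ℝ :=
  Matrix.of fun ir j => (C * A ^ (ir.1 : ℕ)) ir.2 j

/-- `obsRank A C (k+1) = rank Ω_k`; `obsRank A C 0 = rank Ω_{-1} = 0` (void matrix). -/
def obsRank {ι : Type*} [Fintype ι] [DecidableEq ι] {p : ℕ}
    (A : Matrix ι ι ℝ) (C : Matrix (Fin p) ι ℝ) : ℕ → ℕ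
  | 0 => 0
  | k + 1 => (obsMat A C k).rank

/-- ρ_k = rank Ω_k − rank Ω_{k-1}. -/
def rho {ι : Type*} [Fintype ι] [DecidableEq ι] {p : ℕ}
    (A : Matrix ι ι ℝ) (C : Matrix (Fin p) ι ℝ) (k : ℕ) : ℕ :=
  obsRank A C (k + 1) - obsRank A C k

/-- The lag ℓ(C,A): the smallest k ≥ 0 with rank Ω_k = rank Ω_{k-1}. -/
def lag {ι : Type*} [Fintype ι] [DecidableEq ι] {p : ℕ}
    (A : Matrix ι ι ℝ) (C : Matrix (Fin p) ι ℝ) : ℕ :=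
  sInf {k | obsRank A C (k + 1) = obsRank A C k}

/-- (C,A) is observable iff rank Ω_{n-1} = n where n is the state dimension. -/
def Observable {ι : Type*} [Fintype ι] [DecidableEq ι] {p : ℕ}
    (A : Matrix ι ι ℝ) (C : Matrix (Fin p) ι ℝ) : Prop :=
  obsRank A C (Fintype.card ι) = Fintype.card ι

/-- Block Hankel matrix of depth k+1 built from f_0, ..., f_{T-1}. -/
def hankel {r T : ℕ} (f : Fin T → Fin r → ℝ) (k : ℕ) :
    Matrix (Fin (k + 1) × Fin r) (Fin (T - k)) ℝ :=
  Matrix.of fun ia j =>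
    f ⟨(ia.1 : ℕ) + (j : ℕ), by have h1 := ia.1.isLt; have h2 := j.isLt; omega⟩ ia.2

/-- H_k : Hankel matrix of depth k+1 of the stacked data (u; y). -/
def Hmat {m p T : ℕ} (u : Fin T → Fin m → ℝ) (y : Fin T → Fin p → ℝ) (k : ℕ) :
    Matrix ((Fin (k + 1) × Fin m) ⊕ (Fin (k + 1) × Fin p)) (Fin (T - k)) ℝ :=
  Matrix.fromRows (hankel u k) (hankel y k)

/-- G_k : H_k with its last p rows (the y_k block) deleted. -/
def Gmat {m p T : ℕ} (u : Fin T → Fin m → ℝ) (y : Fin T → Fin p → ℝ) (k : ℕ) :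
    Matrix ((Fin (k + 1) × Fin m) ⊕ (Fin k × Fin p)) (Fin (T - k)) ℝ :=
  Matrix.fromRows (hankel u k)
    (Matrix.of fun ia j =>
      y ⟨(ia.1 : ℕ) + (j : ℕ), by have h1 := ia.1.isLt; have h2 := j.isLt; omega⟩ ia.2)

/-- δ_k = rank H_k − rank G_k. -/
def delta {m p T : ℕ} (u : Fin T → Fin m → ℝ) (y : Fin T → Fin p → ℝ) (k : ℕ) : ℕ :=
  (Hmat u y k).rank - (Gmat u y k).rank

/-- (A,B,C,D) explains the data (u,y) with state sequence x. -/
def Explains {ι : Type*} [Fintype ι] {m p T : ℕ}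
    (A : Matrix ι ι ℝ) (B : Matrix ι (Fin m) ℝ)
    (C : Matrix (Fin p) ι ℝ) (D : Matrix (Fin p) (Fin m) ℝ)
    (u : Fin T → Fin m → ℝ) (y : Fin T → Fin p → ℝ) (x : Fin (T + 1) → ι → ℝ) : Prop :=
  ∀ t : Fin T,
    x t.succ = A.mulVec (x t.castSucc) + B.mulVec (u t) ∧
    y t = C.mulVec (x t.castSucc) + D.mulVec (u t)

/-- J_k(x): the state row block x_{[0,T-k-1]} stacked over the depth-(k+1) input Hankel matrix. -/
def Jmat {ι : Type*} {m T : ℕ} (u : Fin T → Fin m → ℝ) (x : Fin (T + 1) → ι → ℝ) (k : ℕ) :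
    Matrix (ι ⊕ (Fin (k + 1) × Fin m)) (Fin (T - k)) ℝ :=
  Matrix.fromRows (Matrix.of fun i j => x ⟨(j : ℕ), by have := j.isLt; omega⟩ i) (hankel u k)

open Module

section Obs
variable {ι : Type*} [Fintype ι] [DecidableEq ι] {p : ℕ}
variable (A : Matrix ι ι ℝ) (C : Matrix (Fin p) ι ℝ)

def Kspace : ℕ → Submodule ℝ (ι → ℝ)
  | 0 => ⊤
  | k + 1 => LinearMap.ker (obsMat A C k).mulVecLin

lemma mem_Kspace {k : ℕ} {v : ι → ℝ} :
    v ∈ Kspace A C k ↔ ∀ i < k, (C * A ^ i).mulVec v = 0 := by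
  cases k with
  | zero => simp [Kspace]
  | succ k =>
    simp only [Kspace, LinearMap.mem_ker, Matrix.mulVecLin_apply]
    constructor
    · intro h i hi
      funext a
      have := congrFun h (⟨i, hi⟩, a)
      simpa [obsMat, Matrix.mulVec, dotProduct] using this
    · intro h
      funext ia
      have := congrFun (h ia.1 ia.1.isLt) ia.2
      simpa [obsMat, Matrix.mulVec, dotProduct] using this

lemma Kspace_antitone : Antitone (Kspace A C) := by
  apply antitone_nat_of_succ_le
  intro k v hv
  rw [mem_Kspace] at hv ⊢
  exact fun i hi => hv i (Nat.lt_succ_of_lt hi)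

lemma obsRank_add_nullity (k : ℕ) :
    obsRank A C k + finrank ℝ (Kspace A C k) = Fintype.card ι := by
  cases k with
  | zero =>
    change 0 + finrank ℝ (⊤ : Submodule ℝ (ι → ℝ)) = _
    rw [finrank_top, Module.finrank_fintype_fun_eq_card]; simp
  | succ k =>
    change (obsMat A C k).rank + finrank ℝ (LinearMap.ker (obsMat A C k).mulVecLin) = _
    rw [Matrix.rank, LinearMap.finrank_range_add_finrank_ker, Module.finrank_fintype_fun_eq_card]

lemma obsRank_mono : Monotone (obsRank A C) := by
  apply monotone_nat_of_le_succ
  intro k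
  have h1 := obsRank_add_nullity A C k
  have h2 := obsRank_add_nullity A C (k + 1)
  have h3 : finrank ℝ (Kspace A C (k+1)) ≤ finrank ℝ (Kspace A C k) :=
    Submodule.finrank_mono (Kspace_antitone A C (Nat.le_succ k))
  omega

lemma Kspace_eq_of_rank_eq {k : ℕ} (h : obsRank A C (k + 1) = obsRank A C k) :
    Kspace A C (k + 1) = Kspace A C k := by
  have h1 := obsRank_add_nullity A C k
  have h2 := obsRank_add_nullity A C (k + 1)
  exact Submodule.eq_of_le_of_finrank_eq (Kspace_antitone A C (Nat.le_succ k)) (by omega)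

lemma Kspace_stab {k : ℕ} (h : Kspace A C (k + 1) = Kspace A C k) :
    Kspace A C (k + 2) = Kspace A C (k + 1) := by
  apply le_antisymm (Kspace_antitone A C (Nat.le_succ _))
  intro v hv
  rw [mem_Kspace] at hv ⊢
  intro i hi
  rcases Nat.lt_or_ge i (k + 1) with h' | h'
  · exact hv i h'
  have hi' : i = k + 1 := by omega
  subst hi'
  have hw : A.mulVec v ∈ Kspace A C k := by
    rw [mem_Kspace]
    intro j hj
    rw [Matrix.mulVec_mulVec, Matrix.mul_assoc, ← pow_succ]
    exact hv (j + 1) (by omega)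
  rw [← h, mem_Kspace] at hw
  have hk2 := hw k (Nat.lt_succ_self k)
  rw [Matrix.mulVec_mulVec, Matrix.mul_assoc, ← pow_succ] at hk2
  exact hk2

lemma obsRank_stab {j : ℕ} (h : obsRank A C (j + 1) = obsRank A C j) :
    ∀ i, j ≤ i → obsRank A C i = obsRank A C j := by
  have step : ∀ d, Kspace A C (j + d + 1) = Kspace A C (j + d) := by
    intro d
    induction d with
    | zero => exact Kspace_eq_of_rank_eq A C h
    | succ d ih => exact Kspace_stab A C ih
  have keq : ∀ d, Kspace A C (j + d) = Kspace A C j := by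
    intro d
    induction d with
    | zero => rfl
    | succ d ih => rw [show j + (d+1) = j + d + 1 from rfl, step d, ih]
  intro i hi
  have h1 := obsRank_add_nullity A C i
  have h2 := obsRank_add_nullity A C j
  have h3 : Kspace A C i = Kspace A C j := by
    have := keq (i - j); rwa [Nat.add_sub_cancel' hi] at this
  rw [h3] at h1
  omega

lemma obsMat_ker_eq_bot (hobs : Observable A C) {k : ℕ} (hk : lag A C ≤ k + 1) :
    LinearMap.ker (obsMat A C k).mulVecLin = ⊥ := by
  have hne : {j | obsRank A C (j + 1) = obsRank A C j}.Nonempty := by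
    by_contra hc
    rw [Set.not_nonempty_iff_eq_empty, Set.eq_empty_iff_forall_notMem] at hc
    simp only [Set.mem_setOf_eq] at hc
    have hstrict : ∀ j, j ≤ obsRank A C j := by
      intro j
      induction j with
      | zero => exact Nat.zero_le _
      | succ j ih =>
        have h1 : obsRank A C j ≤ obsRank A C (j + 1) := obsRank_mono A C (Nat.le_succ j)
        have h2 := hc j
        omega
    have h1 := hstrict (Fintype.card ι + 1)
    have h2 := obsRank_add_nullity A C (Fintype.card ι + 1)
    omega
  have hmem := Nat.sInf_mem hne
  simp only [Set.mem_setOf_eq] at hmem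
  have hconst := obsRank_stab A C hmem
  have hge : ∀ j, j ≤ lag A C → j ≤ obsRank A C j := by
    intro j hj
    induction j with
    | zero => exact Nat.zero_le _
    | succ j ih =>
      have h1 : obsRank A C j ≤ obsRank A C (j + 1) := obsRank_mono A C (Nat.le_succ j)
      have h2 : obsRank A C (j + 1) ≠ obsRank A C j := fun hEq =>
        Nat.notMem_of_lt_sInf (by omega : j < lag A C) (Set.mem_setOf_eq ▸ hEq)
      have := ih (by omega)
      omega
  have hLn : lag A C ≤ Fintype.card ι := by
    have h1 := hge (lag A C) le_rfl
    have h2 := obsRank_add_nullity A C (lag A C)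
    omega
  have e1 : obsRank A C (k + 1) = obsRank A C (lag A C) := hconst _ hk
  have e2 : obsRank A C (Fintype.card ι) = obsRank A C (lag A C) := hconst _ hLn
  rw [Observable] at hobs
  have h1 := obsRank_add_nullity A C (k + 1)
  have hnull : finrank ℝ (Kspace A C (k + 1)) = 0 := by omega
  have : Kspace A C (k + 1) = ⊥ := Submodule.finrank_eq_zero.mp hnull
  exact this

end Obs

section Dyn
variable {ι : Type*} [Fintype ι] [DecidableEq ι] {m p T : ℕ}
    (A : Matrix ι ι ℝ) (B : Matrix ι (Fin m) ℝ)
    (C : Matrix (Fin p) ι ℝ) (D : Matrix (Fin p) (Fin m) ℝ)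
    (u : Fin T → Fin m → ℝ) (y : Fin T → Fin p → ℝ) (x : Fin (T + 1) → ι → ℝ)

/-- extensions by zero -/
def uu : ℕ → Fin m → ℝ := fun t => if h : t < T then u ⟨t, h⟩ else 0
def xx : ℕ → ι → ℝ := fun t => if h : t < T + 1 then x ⟨t, h⟩ else 0

lemma state_formula (hE : Explains A B C D u y x) (i j : ℕ) (h : j + i ≤ T) :
    xx x (j + i) = (A ^ i).mulVec (xx x j)
      + ∑ s ∈ Finset.range i, ((A ^ (i - 1 - s)) * B).mulVec (uu u (j + s)) := by
  induction i with
  | zero => simp [Matrix.one_mulVec]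
  | succ i ih =>
    have hlt : j + i < T := by omega
    have hrec := (hE ⟨j + i, hlt⟩).1
    have e1 : xx x (j + (i + 1)) = A.mulVec (xx x (j + i)) + B.mulVec (uu u (j + i)) := by
      simp only [xx, uu]
      rw [dif_pos (by omega : j + (i+1) < T + 1), dif_pos (by omega : j + i < T + 1),
        dif_pos hlt]
      exact hrec
    rw [e1, ih (by omega), Matrix.mulVec_add, Matrix.mulVec_mulVec, ← pow_succ',
      Finset.sum_range_succ]
    have e2 : A.mulVec (∑ s ∈ Finset.range i, ((A ^ (i - 1 - s)) * B).mulVec (uu u (j + s)))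
        = ∑ s ∈ Finset.range i, ((A ^ (i + 1 - 1 - s)) * B).mulVec (uu u (j + s)) := by
      rw [show A.mulVec (∑ s ∈ Finset.range i, ((A ^ (i - 1 - s)) * B).mulVec (uu u (j + s)))
          = A.mulVecLin (∑ s ∈ Finset.range i, ((A ^ (i - 1 - s)) * B).mulVec (uu u (j + s)))
          from rfl, map_sum]
      refine Finset.sum_congr rfl fun s hs => ?_
      have hsi : s < i := Finset.mem_range.mp hs
      have hsi2 : i - 1 - s + 1 = i + 1 - 1 - s := by omega
      rw [Matrix.mulVecLin_apply, Matrix.mulVec_mulVec, ← Matrix.mul_assoc, ← pow_succ', hsi2]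
    rw [e2]
    have e3 : (A ^ (i + 1 - 1 - i)) * B = B := by
      simp
    rw [show (i+1) - 1 - i = 0 from by omega]
    rw [pow_zero, Matrix.one_mul]
    abel

lemma output_formula (hE : Explains A B C D u y x) (i j : ℕ) (h : j + i < T) :
    y ⟨j + i, h⟩ = (C * A ^ i).mulVec (xx x j)
      + ∑ s ∈ Finset.range i, ((C * A ^ (i - 1 - s)) * B).mulVec (uu u (j + s))
      + D.mulVec (uu u (j + i)) := by
  have hout := (hE ⟨j + i, h⟩).2
  have e0 : uu u (j + i) = u ⟨j + i, h⟩ := dif_pos h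
  have e1 : x (Fin.castSucc ⟨j + i, h⟩) = xx x (j + i) := by
    simp only [xx]; rw [dif_pos (by omega : j + i < T + 1)]; rfl
  rw [hout, e0, e1, state_formula A B C D u y x hE i j (le_of_lt h),
    Matrix.mulVec_add, ← Matrix.mulVec_mulVec]
  congr 2
  rw [show C.mulVec (∑ s ∈ Finset.range i, ((A ^ (i - 1 - s)) * B).mulVec (uu u (j + s)))
      = C.mulVecLin (∑ s ∈ Finset.range i, ((A ^ (i - 1 - s)) * B).mulVec (uu u (j + s)))
      from rfl, map_sum]
  refine Finset.sum_congr rfl fun s hs => ?_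
  rw [Matrix.mulVecLin_apply, Matrix.mulVec_mulVec, ← Matrix.mul_assoc]

end Dyn

section Fact
variable {ι : Type*} [Fintype ι] [DecidableEq ι] {m p T : ℕ}
    (A : Matrix ι ι ℝ) (B : Matrix ι (Fin m) ℝ)
    (C : Matrix (Fin p) ι ℝ) (D : Matrix (Fin p) (Fin m) ℝ)
    (u : Fin T → Fin m → ℝ) (y : Fin T → Fin p → ℝ) (x : Fin (T + 1) → ι → ℝ)

def Theta (k : ℕ) : Matrix (Fin (k + 1) × Fin p) (Fin (k + 1) × Fin m) ℝ :=
  Matrix.of fun ia sb =>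
    if (sb.1 : ℕ) < (ia.1 : ℕ) then (C * A ^ ((ia.1 : ℕ) - 1 - (sb.1 : ℕ)) * B) ia.2 sb.2
    else if (sb.1 : ℕ) = (ia.1 : ℕ) then D ia.2 sb.2 else 0

def Phi (k : ℕ) :
    Matrix ((Fin (k + 1) × Fin m) ⊕ (Fin (k + 1) × Fin p)) (ι ⊕ (Fin (k + 1) × Fin m)) ℝ :=
  Matrix.fromBlocks 0 1 (obsMat A C k) (Theta A B C D k)

lemma hankelFactorization (hE : Explains A B C D u y x) (k : ℕ) (hkT : k + 1 ≤ T) :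
    Hmat u y k = Phi A B C D k * Jmat u x k := by
  ext r j
  have hj : (j : ℕ) < T - k := j.isLt
  cases r with
  | inl ia =>
    rcases ia with ⟨i, a⟩
    rw [Matrix.mul_apply]
    rw [Fintype.sum_sum_type]
    simp only [Phi, Matrix.fromBlocks_apply₁₁, Matrix.fromBlocks_apply₁₂, Matrix.zero_apply,
      zero_mul, Finset.sum_const_zero, zero_add, Matrix.one_apply, ite_mul, one_mul]
    rw [Finset.sum_ite_eq]
    simp only [Finset.mem_univ, if_pos]
    rfl
  | inr ia =>
    rcases ia with ⟨i, a⟩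
    have hik : (i : ℕ) < k + 1 := i.isLt
    have hjT : (j : ℕ) + (i : ℕ) < T := by omega
    have hL : Hmat u y k (Sum.inr (i, a)) j = y ⟨(j : ℕ) + (i : ℕ), hjT⟩ a := by
      simp only [Hmat, Matrix.fromRows_apply_inr, hankel, Matrix.of_apply]
      congr 1
      exact Fin.ext (add_comm _ _)
    rw [hL, output_formula A B C D u y x hE i j hjT, Matrix.mul_apply, Fintype.sum_sum_type]
    have hx : xx x (j : ℕ) = x ⟨(j : ℕ), by omega⟩ := dif_pos (by omega)
    have hterm1 :
        (∑ c : ι, Phi A B C D k (Sum.inr (i, a)) (Sum.inl c) * Jmat u x k (Sum.inl c) j)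
          = ((C * A ^ (i : ℕ)).mulVec (xx x (j : ℕ))) a := by
      rw [hx]
      simp only [Phi, Matrix.fromBlocks_apply₂₁, obsMat, Matrix.of_apply, Jmat,
        Matrix.fromRows_apply_inl, Matrix.mulVec, dotProduct]
    set G : ℕ → ℝ := fun s =>
      if s < (i : ℕ) then ((C * A ^ ((i : ℕ) - 1 - s) * B).mulVec (uu u ((j : ℕ) + s))) a
      else if s = (i : ℕ) then (D.mulVec (uu u ((j : ℕ) + (i : ℕ)))) a else 0 with hG
    have hterm2 :
        (∑ sb : Fin (k + 1) × Fin m,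
            Phi A B C D k (Sum.inr (i, a)) (Sum.inr sb) * Jmat u x k (Sum.inr sb) j)
          = ∑ s : Fin (k + 1), G (s : ℕ) := by
      rw [Fintype.sum_prod_type]
      refine Finset.sum_congr rfl fun s _ => ?_
      have hsu : ∀ b : Fin m, Jmat u x k (Sum.inr (s, b)) j = uu u ((j : ℕ) + (s : ℕ)) b := by
        intro b
        simp only [Jmat, Matrix.fromRows_apply_inr, hankel, Matrix.of_apply, uu]
        rw [dif_pos (by omega : (j : ℕ) + (s : ℕ) < T)]
        congr 1
        exact Fin.ext (add_comm _ _)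
      simp only [hsu, Phi, Matrix.fromBlocks_apply₂₂, Theta, Matrix.of_apply, hG]
      by_cases hlt : (s : ℕ) < (i : ℕ)
      · simp [hlt, Matrix.mulVec, dotProduct]
      · by_cases heq : (s : ℕ) = (i : ℕ)
        · simp [hlt, heq, Matrix.mulVec, dotProduct]
        · simp [hlt, heq]
    have hsub : Finset.range ((i : ℕ) + 1) ⊆ Finset.range (k + 1) :=
      Finset.range_subset_range.mpr (by omega)
    have hzero : ∀ t ∈ Finset.range (k + 1), t ∉ Finset.range ((i : ℕ) + 1) → G t = 0 := by
      intro t _ ht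
      have : ¬ t < (i : ℕ) + 1 := fun hc => ht (Finset.mem_range.mpr hc)
      simp only [hG]
      rw [if_neg (by omega), if_neg (by omega)]
    have hsum : ∑ s : Fin (k + 1), G (s : ℕ)
        = (∑ s ∈ Finset.range (i : ℕ),
              ((C * A ^ ((i : ℕ) - 1 - s) * B).mulVec (uu u ((j : ℕ) + s)))) a
          + (D.mulVec (uu u ((j : ℕ) + (i : ℕ)))) a := by
      rw [Fin.sum_univ_eq_sum_range G (k + 1), ← Finset.sum_subset hsub hzero,
        Finset.sum_range_succ]
      congr 1
      · rw [Finset.sum_apply]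
        refine Finset.sum_congr rfl fun s hs => ?_
        have := Finset.mem_range.mp hs
        simp only [hG]
        rw [if_pos this]
      · simp [hG]
    rw [hterm1, hterm2, hsum]
    simp only [Pi.add_apply]
    ring

end Fact

lemma rank_mul_of_inj {n o r : Type*} [Fintype n] [Fintype o] [Fintype r]
    (M : Matrix n o ℝ) (N : Matrix o r ℝ) (h : Function.Injective M.mulVecLin) :
    (M * N).rank = N.rank := by
  rw [Matrix.rank, Matrix.rank, Matrix.mulVecLin_mul, LinearMap.range_comp]
  exact (LinearEquiv.finrank_eq (Submodule.equivMapOfInjective _ h _)).symm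

lemma Phi_inj {ι : Type*} [Fintype ι] [DecidableEq ι] {m p : ℕ}
    (A : Matrix ι ι ℝ) (B : Matrix ι (Fin m) ℝ)
    (C : Matrix (Fin p) ι ℝ) (D : Matrix (Fin p) (Fin m) ℝ)
    (hobs : Observable A C) {k : ℕ} (hk : lag A C ≤ k + 1) :
    Function.Injective (Phi A B C D k).mulVecLin := by
  rw [← LinearMap.ker_eq_bot, Submodule.eq_bot_iff]
  intro v hv
  rw [LinearMap.mem_ker, Matrix.mulVecLin_apply] at hv
  have hv' : (Phi A B C D k).mulVec (Sum.elim (v ∘ Sum.inl) (v ∘ Sum.inr)) = 0 := by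
    rwa [Sum.elim_comp_inl_inr]
  rw [Phi, Matrix.fromBlocks_mulVec] at hv'
  have h2 : v ∘ Sum.inr = 0 := by
    funext r
    have := congrFun hv' (Sum.inl r)
    simpa using this
  have h1 : (obsMat A C k).mulVec (v ∘ Sum.inl) = 0 := by
    funext r
    have := congrFun hv' (Sum.inr r)
    rw [h2] at this
    simpa using this
  have h3 : v ∘ Sum.inl = 0 := by
    have hker := obsMat_ker_eq_bot A C hobs hk
    have : (v ∘ Sum.inl) ∈ LinearMap.ker (obsMat A C k).mulVecLin := by
      rw [LinearMap.mem_ker, Matrix.mulVecLin_apply]; exact h1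
    rw [hker, Submodule.mem_bot] at this
    exact this
  funext c
  cases c with
  | inl c => exact congrFun h3 c
  | inr c => exact congrFun h2 c


theorem stmt8 {ι : Type*} [Fintype ι] [DecidableEq ι] {m p T : ℕ}
    (A : Matrix ι ι ℝ) (B : Matrix ι (Fin m) ℝ)
    (C : Matrix (Fin p) ι ℝ) (D : Matrix (Fin p) (Fin m) ℝ)
    (u : Fin T → Fin m → ℝ) (y : Fin T → Fin p → ℝ) (x : Fin (T + 1) → ι → ℝ)
    (hE : Explains A B C D u y x) (hobs : Observable A C)
    (k : ℕ) (hk : max (lag A C - 1) 0 ≤ k) (hkT : k ≤ T - 1) (hT : 1 ≤ T) :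
    (Jmat u x k).rank = (Hmat u y k).rank := by
  have hk' : lag A C ≤ k + 1 := by
    have := le_trans (le_max_left (lag A C - 1) 0) hk
    omega
  have hfac := hankelFactorization A B C D u y x hE k (by omega)
  rw [hfac, rank_mul_of_inj _ _ (Phi_inj A B C D hobs hk')]
end
end

section
/- Let (A,B,C,D) explain the data with state x, and suppose for some k ∈ [1,T−1] that rank J_{k−1}(x) + m = rank J_k(x) and J_k(x) does not have full row rank. Then (A,B) is not controllable. -/
open Matrix
noncomputable section

/-- Controllability matrix [B AB ... A^(n-1)B]. -/
def ctrbMat {ι : Type*} [Fintype ι] [DecidableEq ι] {m : ℕ}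
    (A : Matrix ι ι ℝ) (B : Matrix ι (Fin m) ℝ) :
    Matrix ι (Fin (Fintype.card ι) × Fin m) ℝ :=
  Matrix.of fun i jk => (A ^ (jk.1 : ℕ) * B) i jk.2

/-- (A,B) is controllable iff the controllability matrix has full (row) rank n. -/
def Controllable {ι : Type*} [Fintype ι] [DecidableEq ι] {m : ℕ}
    (A : Matrix ι ι ℝ) (B : Matrix ι (Fin m) ℝ) : Prop :=
  (ctrbMat A B).rank = Fintype.card ι

/- ## Auxiliary material -/

lemma finrank_ker_add_rank {R C : Type*} [Fintype R] [Fintype C] (M : Matrix R C ℝ) :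
    Module.finrank ℝ (LinearMap.ker M.vecMulLinear) + M.rank = Fintype.card R := by
  have h := LinearMap.finrank_range_add_finrank_ker (Mᵀ.mulVecLin)
  have hr : Module.finrank ℝ (LinearMap.range (Mᵀ.mulVecLin)) = M.rank := by
    rw [← Matrix.rank_transpose M]; rfl
  rw [hr, Matrix.mulVecLin_transpose, Module.finrank_pi] at h
  omega

lemma memJ {ι : Type*} [Fintype ι] {m T : ℕ} (u : Fin T → Fin m → ℝ)
    (x : Fin (T + 1) → ι → ℝ) (k : ℕ) (w : (ι ⊕ Fin (k+1) × Fin m) → ℝ) :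
    w ∈ LinearMap.ker (Jmat u x k).vecMulLinear ↔
      ∀ j : Fin (T - k),
        (∑ a, w (Sum.inl a) * x ⟨(j:ℕ), by have := j.isLt; omega⟩ a) +
        ∑ i : Fin (k+1), ∑ b, w (Sum.inr (i, b)) *
          u ⟨(i:ℕ) + (j:ℕ), by have h1 := i.isLt; have h2 := j.isLt; omega⟩ b = 0 := by
  rw [LinearMap.mem_ker, funext_iff]
  simp only [Matrix.vecMulLinear_apply, Matrix.vecMul, dotProduct, Pi.zero_apply,
    Fintype.sum_sum_type, Fintype.sum_prod_type, Jmat, hankel, Matrix.fromRows,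
    Matrix.of_apply, Sum.elim_inl, Sum.elim_inr]
  exact Iff.rfl

/-- Extend a vector on `ι ⊕ Fin (k'+1) × Fin m` by a zero last block. -/
def extv {ι : Type*} {m k' : ℕ} (w : (ι ⊕ Fin (k'+1) × Fin m) → ℝ) :
    (ι ⊕ Fin (k'+2) × Fin m) → ℝ
  | .inl a => w (.inl a)
  | .inr (i, b) => if h : (i:ℕ) < k'+1 then w (.inr (⟨i, h⟩, b)) else 0

/-- Restrict a vector on `ι ⊕ Fin (k'+2) × Fin m` to the first k'+1 blocks. -/
def restv {ι : Type*} {m k' : ℕ} (v : (ι ⊕ Fin (k'+2) × Fin m) → ℝ) :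
    (ι ⊕ Fin (k'+1) × Fin m) → ℝ
  | .inl a => v (.inl a)
  | .inr (i, b) => v (.inr (⟨(i:ℕ), by have := i.isLt; omega⟩, b))

/-- The shift map associated to (A,B). -/
def shiftv {ι : Type*} [Fintype ι] {m k' : ℕ} (A : Matrix ι ι ℝ) (B : Matrix ι (Fin m) ℝ)
    (w : (ι ⊕ Fin (k'+1) × Fin m) → ℝ) : (ι ⊕ Fin (k'+2) × Fin m) → ℝ
  | .inl a => ∑ c, w (.inl c) * A c a
  | .inr (i, b) =>
      if (i:ℕ) = 0 then ∑ c, w (.inl c) * B c b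
      else w (.inr (⟨(i:ℕ) - 1, by have := i.isLt; omega⟩, b))

lemma restv_extv {ι : Type*} {m k' : ℕ} (w : (ι ⊕ Fin (k'+1) × Fin m) → ℝ) :
    restv (extv w) = w := by
  funext i
  rcases i with a | ⟨i, b⟩
  · rfl
  · simp [restv, extv, i.isLt]

/-- `extv` as a linear map. -/
def extL (ι : Type*) (m k' : ℕ) :
    ((ι ⊕ Fin (k'+1) × Fin m) → ℝ) →ₗ[ℝ] ((ι ⊕ Fin (k'+2) × Fin m) → ℝ) where
  toFun := extv
  map_add' w₁ w₂ := by
    funext i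
    rcases i with a | ⟨i, b⟩
    · rfl
    · simp only [extv, Pi.add_apply]; split <;> simp
  map_smul' c w := by
    funext i
    rcases i with a | ⟨i, b⟩
    · rfl
    · simp only [extv, Pi.smul_apply, RingHom.id_apply, smul_eq_mul]; split <;> simp

theorem stmt10 {ι : Type*} [Fintype ι] [DecidableEq ι] {m p T : ℕ}
    (A : Matrix ι ι ℝ) (B : Matrix ι (Fin m) ℝ)
    (C : Matrix (Fin p) ι ℝ) (D : Matrix (Fin p) (Fin m) ℝ)
    (u : Fin T → Fin m → ℝ) (y : Fin T → Fin p → ℝ) (x : Fin (T + 1) → ι → ℝ)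
    (hE : Explains A B C D u y x)
    (k : ℕ) (hk1 : 1 ≤ k) (hkT : k ≤ T - 1) (hT : 1 ≤ T)
    (hstep : (Jmat u x (k - 1)).rank + m = (Jmat u x k).rank)
    (hnotfull : (Jmat u x k).rank ≠ Fintype.card ι + (k + 1) * m) :
    ¬ Controllable A B := by
  obtain ⟨k', rfl⟩ : ∃ k', k = k' + 1 := ⟨k - 1, by omega⟩
  intro hC
  classical
  have hstep' : (Jmat u x k').rank + m = (Jmat u x (k'+1)).rank := hstep
  have hT2 : k' + 2 ≤ T := by omega
  set K' := LinearMap.ker (Jmat u x k').vecMulLinear with hK'def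
  set K := LinearMap.ker (Jmat u x (k'+1)).vecMulLinear with hKdef
  -- extension maps K' into K
  have hEK : ∀ w ∈ K', extv w ∈ K := by
    intro w hw
    rw [memJ] at hw ⊢
    intro j
    have hjlt : (j:ℕ) < T - k' := by have := j.isLt; omega
    have hw' := hw ⟨(j:ℕ), hjlt⟩
    rw [Fin.sum_univ_castSucc]
    have hlast : ∀ b : Fin m, extv (k' := k') w (Sum.inr (Fin.last (k'+1), b)) = 0 := by
      intro b; simp [extv]
    simp only [hlast, zero_mul, Finset.sum_const_zero, add_zero]
    have hcast : ∀ (i : Fin (k'+1)) (b : Fin m),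
        extv (k' := k') w (Sum.inr (Fin.castSucc i, b)) = w (Sum.inr (i, b)) := by
      intro i b; simp [extv, i.isLt]
    simp only [hcast]
    convert hw' using 3 <;> rfl
  -- injectivity of extL
  have hinj : Function.Injective (extL ι m k') :=
    Function.LeftInverse.injective (g := restv) (fun w => restv_extv w)
  -- dimension count
  have hd1 := finrank_ker_add_rank (Jmat u x k')
  have hd2 := finrank_ker_add_rank (Jmat u x (k'+1))
  rw [show Fintype.card (ι ⊕ Fin (k'+1) × Fin m) = Fintype.card ι + (k'+1) * m by
    simp [Fintype.card_sum, Fintype.card_prod]] at hd1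
  rw [show Fintype.card (ι ⊕ Fin (k'+2) × Fin m) = Fintype.card ι + (k'+2) * m by
    simp [Fintype.card_sum, Fintype.card_prod]] at hd2
  rw [← hK'def] at hd1
  rw [← hKdef] at hd2
  have hfrk : Module.finrank ℝ K = Module.finrank ℝ K' := by
    have hmul : (k' + 2) * m = (k' + 1) * m + m := by ring
    omega
  -- K = extL '' K'
  have hle : Submodule.map (extL ι m k') K' ≤ K := by
    rintro v ⟨w, hw, rfl⟩
    exact hEK w hw
  have hfr : Module.finrank ℝ (Submodule.map (extL ι m k') K') = Module.finrank ℝ K :=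
    ((Submodule.equivMapOfInjective _ hinj K').finrank_eq.symm).trans hfrk.symm
  have hKeq : Submodule.map (extL ι m k') K' = K :=
    Submodule.eq_of_le_of_finrank_eq hle hfr
  -- membership in K forces last block zero and restriction in K'
  have hKchar : ∀ v ∈ K, restv v ∈ K' ∧ ∀ (i : Fin (k'+2)) (b : Fin m),
      (i:ℕ) = k' + 1 → v (Sum.inr (i, b)) = 0 := by
    intro v hv
    rw [← hKeq] at hv
    obtain ⟨w, hw, rfl⟩ := hv
    constructor
    · rw [show (extL ι m k') w = extv w from rfl, restv_extv]; exact hw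
    · intro i b hi
      show extv w (Sum.inr (i, b)) = 0
      simp [extv, hi]
  -- the shift maps K' into K
  have hshift : ∀ w ∈ K', shiftv A B w ∈ K := by
    intro w hw
    rw [memJ] at hw ⊢
    intro j
    have hjT : (j:ℕ) < T := by have := j.isLt; omega
    have hj1 : (j:ℕ) + 1 < T - k' := by have := j.isLt; omega
    have hw' := hw ⟨(j:ℕ) + 1, hj1⟩
    have hx := (hE ⟨(j:ℕ), hjT⟩).1
    have h1 : (∑ a, shiftv A B w (Sum.inl a) * x ⟨(j:ℕ), by omega⟩ a)
        = ∑ c, w (Sum.inl c) * (A.mulVec (x ⟨(j:ℕ), by omega⟩)) c := by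
      show (∑ a, (∑ c, w (Sum.inl c) * A c a) * x ⟨(j:ℕ), by omega⟩ a) = _
      simp only [Finset.sum_mul, Matrix.mulVec, dotProduct, Finset.mul_sum, mul_assoc]
      rw [Finset.sum_comm]
    rw [Fin.sum_univ_succ]
    have h2 : (∑ b, shiftv A B w (Sum.inr ((0 : Fin (k'+2)), b)) *
        u ⟨((0:Fin (k'+2)):ℕ) + (j:ℕ), by have := j.isLt; omega⟩ b)
        = ∑ c, w (Sum.inl c) * (B.mulVec (u ⟨(j:ℕ), hjT⟩)) c := by
      have hz : ∀ b : Fin m, shiftv A B w (Sum.inr ((0 : Fin (k'+2)), b))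
          = ∑ c, w (Sum.inl c) * B c b := by intro b; simp [shiftv]
      simp only [hz, Finset.sum_mul, Matrix.mulVec, dotProduct, Finset.mul_sum, mul_assoc]
      rw [Finset.sum_comm]
      simp
    have h3 : ∀ (i : Fin (k'+1)) (b : Fin m),
        shiftv A B w (Sum.inr (Fin.succ i, b)) = w (Sum.inr (i, b)) := by
      intro i b
      simp [shiftv, Fin.val_succ]
    simp only [h1, h2, h3]
    have hsum : (∑ c, w (Sum.inl c) * (A.mulVec (x ⟨(j:ℕ), by omega⟩)) c) +
        (∑ c, w (Sum.inl c) * (B.mulVec (u ⟨(j:ℕ), hjT⟩)) c)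
        = ∑ c, w (Sum.inl c) * x ⟨(j:ℕ)+1, by omega⟩ c := by
      rw [← Finset.sum_add_distrib]
      have hxx : x (⟨(j:ℕ)+1, by omega⟩ : Fin (T+1)) = A.mulVec (x ⟨(j:ℕ), by omega⟩)
          + B.mulVec (u ⟨(j:ℕ), hjT⟩) := hx
      rw [hxx]
      simp [mul_add]
    rw [← add_assoc, hsum]
    have hfix : ∀ (i : Fin (k'+1)) (b : Fin m),
        w (Sum.inr (i, b)) *
          u ⟨((Fin.succ i : Fin (k'+2)) : ℕ) + (j:ℕ),
              by have := i.isLt; have := j.isLt; omega⟩ b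
          = w (Sum.inr (i, b)) *
            u ⟨(i:ℕ) + ((j:ℕ) + 1), by have := i.isLt; have := j.isLt; omega⟩ b := by
      intro i b
      congr 2
      simp [Fin.val_succ]
      omega
    simp only [hfix]
    exact hw'
  -- every vector in K' vanishes on block k' - d, by induction on d
  have hind : ∀ d, d ≤ k' → ∀ w ∈ K', ∀ b (h : k' - d < k' + 1),
      w (Sum.inr (⟨k' - d, h⟩, b)) = 0 := by
    intro d
    induction d with
    | zero =>
      intro _ w hw b h
      have hK := (hKchar _ (hshift w hw)).2 ⟨k'+1, by omega⟩ b rfl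
      have : shiftv A B w (Sum.inr (⟨k'+1, by omega⟩, b))
          = w (Sum.inr (⟨k', by omega⟩, b)) := by
        simp [shiftv]
      rw [this] at hK
      simpa using hK
    | succ d ih =>
      intro hd w hw b h
      have hres : restv (shiftv A B w) ∈ K' := (hKchar _ (hshift w hw)).1
      have hprev := ih (by omega) _ hres b (by omega)
      have : restv (shiftv A B w) (Sum.inr (⟨k' - d, by omega⟩, b))
          = w (Sum.inr (⟨k' - d - 1, by omega⟩, b)) := by
        show shiftv A B w (Sum.inr (⟨k' - d, by omega⟩, b)) = _
        have hne : ¬ ((⟨k' - d, by omega⟩ : Fin (k'+2)) : ℕ) = 0 := by simp; omega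
        simp only [shiftv, hne, if_false]
      rw [this] at hprev
      have heq : k' - d - 1 = k' - (d + 1) := by omega
      have heq2 : ∀ (h1 : k' - d - 1 < k' + 1) (h2 : k' - (d+1) < k' + 1),
          (⟨k' - d - 1, h1⟩ : Fin (k'+1)) = ⟨k' - (d+1), h2⟩ := by
        intro h1 h2; apply Fin.ext; simp [heq]
      rw [heq2 (by omega) (by omega)] at hprev
      exact hprev
  have hzero : ∀ w ∈ K', ∀ (i : Fin (k'+1)) (b : Fin m), w (Sum.inr (i, b)) = 0 := by
    intro w hw i b
    have h := hind (k' - (i:ℕ)) (by omega) w hw b (by omega)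
    have : (⟨k' - (k' - (i:ℕ)), by omega⟩ : Fin (k'+1)) = i := by
      apply Fin.ext
      simp
      have := i.isLt
      omega
    rwa [this] at h
  -- phi preserves K'
  have hphiK : ∀ w ∈ K', restv (shiftv A B w) ∈ K' := fun w hw => (hKchar _ (hshift w hw)).1
  have hphiinl : ∀ (w : (ι ⊕ Fin (k'+1) × Fin m) → ℝ) (a : ι),
      restv (shiftv A B w) (Sum.inl a) = ∑ c, w (Sum.inl c) * A c a := fun w a => rfl
  -- for w ∈ K', the B-block of the shift vanishes
  have hB : ∀ w ∈ K', ∀ b, (∑ c, w (Sum.inl c) * B c b) = 0 := by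
    intro w hw b
    have h := hzero _ (hphiK w hw) 0 b
    have : restv (shiftv A B w) (Sum.inr ((0 : Fin (k'+1)), b))
        = ∑ c, w (Sum.inl c) * B c b := by
      show shiftv A B w (Sum.inr (⟨0, by omega⟩, b)) = _
      simp [shiftv]
    rwa [this] at h
  -- main claim: for all i, w ∈ K' → ∑ c, w(inl c) * (A^i * B) c b = 0
  have hmain : ∀ (i : ℕ), ∀ w ∈ K', ∀ b, (∑ c, w (Sum.inl c) * (A ^ i * B) c b) = 0 := by
    intro i
    induction i with
    | zero =>
      intro w hw b
      simpa using hB w hw b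
    | succ i ih =>
      intro w hw b
      have h := ih _ (hphiK w hw) b
      simp only [hphiinl] at h
      rw [pow_succ', Matrix.mul_assoc]
      calc (∑ c, w (Sum.inl c) * (A * (A ^ i * B)) c b)
          = ∑ c, ∑ d, w (Sum.inl c) * (A c d * (A ^ i * B) d b) := by
            simp only [Matrix.mul_apply, Finset.mul_sum]
        _ = ∑ d, (∑ c, w (Sum.inl c) * A c d) * (A ^ i * B) d b := by
            rw [Finset.sum_comm]
            simp only [Finset.sum_mul, mul_assoc]
        _ = 0 := h
  -- get a nonzero element of K
  have hKne : ∃ v ∈ K, v ≠ 0 := by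
    by_contra hcon
    push_neg at hcon
    have : K = ⊥ := by
      rw [Submodule.eq_bot_iff]
      exact fun v hv => hcon v hv
    rw [this, finrank_bot ℝ _] at hd2
    have hr2 : (Jmat u x (k'+1)).rank ≤ Fintype.card (ι ⊕ Fin (k'+2) × Fin m) :=
      Matrix.rank_le_card_height _
    rw [show Fintype.card (ι ⊕ Fin (k'+2) × Fin m) = Fintype.card ι + (k'+2) * m by
      simp [Fintype.card_sum, Fintype.card_prod]] at hr2
    have hmul : (k' + 1 + 1) * m = (k' + 2) * m := by ring
    exact hnotfull (by omega)
  obtain ⟨v, hvK, hvne⟩ := hKne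
  have hw' : restv v ∈ K' := (hKchar v hvK).1
  -- restv v is nonzero on the ι block
  have hxi : ∃ a, restv v (Sum.inl a) ≠ 0 := by
    by_contra hcon
    push_neg at hcon
    apply hvne
    rw [← hKeq] at hvK
    obtain ⟨w, hw, rfl⟩ := hvK
    have hrw : restv ((extL ι m k') w) = w := restv_extv w
    have hwz : w = 0 := by
      funext i
      rcases i with a | ⟨i, b⟩
      · have := hcon a
        rw [hrw] at this
        exact this
      · exact hzero w hw i b
    rw [hwz]
    exact map_zero _
  obtain ⟨a₀, ha₀⟩ := hxi
  -- build the kernel vector of the controllability matrix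
  set ξ : ι → ℝ := fun a => restv v (Sum.inl a) with hξdef
  -- iterated phi
  have hiter : ∀ i : ℕ, ∀ b, (∑ c, ξ c * (A ^ i * B) c b) = 0 := fun i b =>
    hmain i _ hw' b
  have hker : ξ ∈ LinearMap.ker (ctrbMat A B).vecMulLinear := by
    rw [LinearMap.mem_ker]
    funext jk
    obtain ⟨i, b⟩ := jk
    show (ξ ᵥ* ctrbMat A B) (i, b) = 0
    simp only [Matrix.vecMul, dotProduct, ctrbMat, Matrix.of_apply]
    exact hiter i b
  -- contradiction with controllability
  have hctrb := finrank_ker_add_rank (ctrbMat A B)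
  rw [hC] at hctrb
  have hker0 : Module.finrank ℝ (LinearMap.ker (ctrbMat A B).vecMulLinear) = 0 := by omega
  have : LinearMap.ker (ctrbMat A B).vecMulLinear = ⊥ := Submodule.finrank_eq_zero.mp hker0
  rw [this, Submodule.mem_bot] at hker
  exact ha₀ (congrFun hker a₀)
end
end

section
/- In the setting of the augmented pair (C̄,Ā) = ([C 0], [[A,ζC'],[0,A']]) with ℓ̄ = ℓ(C,A) + n': if ζ' ∈ ℝ^{n'} satisfies C'(A')^i ζ' = 0 for i ∈ [0,n'−2] and C'(A')^{n'−1} ζ' ≠ 0, then the vector [0; ζ'] ∈ ℝ^{n+n'} satisfies C̄ Ā^i [0; ζ'] = 0 for all i ∈ [0, ℓ̄−2] and C̄ Ā^{ℓ̄−1} [0; ζ'] ≠ 0. -/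
open Matrix
noncomputable section

lemma aux_rank_submatrix_rows_le {k m ι : Type*} [Fintype ι] [Fintype k] [Fintype m]
    [DecidableEq ι] (M : Matrix k ι ℝ) (f : m → k) :
    (M.submatrix f id).rank ≤ M.rank := by
  have h : (M.submatrix f id).mulVecLin = (LinearMap.funLeft ℝ ℝ f).comp M.mulVecLin := by
    ext v i
    rfl
  rw [Matrix.rank, Matrix.rank, h, LinearMap.range_comp]
  exact Submodule.finrank_map_le _ _

lemma aux_rank_eq_zero_iff {k ι : Type*} [Fintype k] [Fintype ι] [DecidableEq ι]
    (M : Matrix k ι ℝ) : M.rank = 0 ↔ ∀ v, M *ᵥ v = 0 := by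
  rw [Matrix.rank, Submodule.finrank_eq_zero, LinearMap.range_eq_bot]
  constructor
  · intro h v
    exact congrFun (congrArg DFunLike.coe h) v
  · intro h
    refine LinearMap.ext fun v => ?_
    exact h v

lemma aux_mulVec_sum {m k : Type*} [Fintype k] (M : Matrix m k ℝ) {α : Type*}
    (t : Finset α) (f : α → k → ℝ) :
    M *ᵥ (∑ j ∈ t, f j) = ∑ j ∈ t, M *ᵥ f j :=
  map_sum M.mulVecLin f t

lemma aux_obsRank_le_succ {ι : Type*} [Fintype ι] [DecidableEq ι] {p : ℕ}
    (A : Matrix ι ι ℝ) (C : Matrix (Fin p) ι ℝ) (k : ℕ) :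
    obsRank A C k ≤ obsRank A C (k + 1) := by
  cases k with
  | zero => exact Nat.zero_le _
  | succ k =>
    have h : obsMat A C k =
        (obsMat A C (k + 1)).submatrix (fun ir => (ir.1.castSucc, ir.2)) id := by
      ext ir j
      rfl
    show (obsMat A C k).rank ≤ (obsMat A C (k + 1)).rank
    rw [h]
    exact aux_rank_submatrix_rows_le _ _

lemma aux_lag_pos {n p : ℕ} (hn : 1 ≤ n)
    (A : Matrix (Fin n) (Fin n) ℝ) (C : Matrix (Fin p) (Fin n) ℝ)
    (hobs : Observable A C) : 1 ≤ lag A C := by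
  have hobs' : obsRank A C n = n := by
    simpa [Observable, Fintype.card_fin] using hobs
  have hne : {k | obsRank A C (k + 1) = obsRank A C k}.Nonempty := by
    refine ⟨n, ?_⟩
    have h1 : obsRank A C (n + 1) ≤ n := by
      show (obsMat A C n).rank ≤ n
      simpa using (obsMat A C n).rank_le_card_width
    have h2 : obsRank A C n ≤ obsRank A C (n + 1) := aux_obsRank_le_succ A C n
    simp only [Set.mem_setOf_eq, hobs']
    omega
  by_contra h
  have h0 : lag A C = 0 := by omega
  have hmem : 0 ∈ {k | obsRank A C (k + 1) = obsRank A C k} := by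
    rw [← h0]
    exact Nat.sInf_mem hne
  have hrk : (obsMat A C 0).rank = 0 := by
    simpa [obsRank] using hmem
  rw [aux_rank_eq_zero_iff] at hrk
  -- The key: C *ᵥ v = 0 for all v
  have hC : ∀ v, C *ᵥ v = 0 := by
    intro v
    have := hrk v
    have h1 := congrFun this
    funext r
    have := h1 (0, r)
    simpa [obsMat, Matrix.mulVec] using this
  have hall : (obsMat A C (n - 1)).rank = 0 := by
    rw [aux_rank_eq_zero_iff]
    intro v
    funext ir
    have : (C * A ^ (ir.1 : ℕ)) *ᵥ v = C *ᵥ (A ^ (ir.1 : ℕ) *ᵥ v) :=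
      (Matrix.mulVec_mulVec _ _ _).symm
    calc (obsMat A C (n - 1) *ᵥ v) ir = ((C * A ^ (ir.1 : ℕ)) *ᵥ v) ir.2 := rfl
      _ = (C *ᵥ (A ^ (ir.1 : ℕ) *ᵥ v)) ir.2 := by rw [this]
      _ = 0 := by rw [hC]; rfl
  have : obsRank A C n = (obsMat A C (n - 1)).rank := by
    obtain ⟨m, rfl⟩ : ∃ m, n = m + 1 := ⟨n - 1, by omega⟩
    rfl
  omega

theorem stmt12 {n n' p : ℕ} (hn : 1 ≤ n) (hn' : 1 ≤ n')
    (A : Matrix (Fin n) (Fin n) ℝ) (C : Matrix (Fin p) (Fin n) ℝ)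
    (hobs : Observable A C)
    (ζ : Fin n → ℝ)
    (hz1 : ∀ i, i + 2 ≤ lag A C → (C * A ^ i).mulVec ζ = 0)
    (hz2 : (C * A ^ (lag A C - 1)).mulVec ζ ≠ 0)
    (A' : Matrix (Fin n') (Fin n') ℝ) (C' : Matrix (Fin 1) (Fin n') ℝ)
    (hobs' : Observable A' C')
    (ζ' : Fin n' → ℝ)
    (hz1' : ∀ i, i + 2 ≤ n' → (C' * A' ^ i).mulVec ζ' = 0)
    (hz2' : (C' * A' ^ (n' - 1)).mulVec ζ' ≠ 0) :
    (∀ i, i + 2 ≤ lag A C + n' →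
      (Matrix.fromCols C (0 : Matrix (Fin p) (Fin n') ℝ) *
          (Matrix.fromBlocks A (Matrix.of fun i j => ζ i * C' 0 j) 0 A') ^ i).mulVec
        (Sum.elim (fun _ => (0 : ℝ)) ζ') = 0) ∧
    (Matrix.fromCols C (0 : Matrix (Fin p) (Fin n') ℝ) *
        (Matrix.fromBlocks A (Matrix.of fun i j => ζ i * C' 0 j) 0 A') ^
          (lag A C + n' - 1)).mulVec
      (Sum.elim (fun _ => (0 : ℝ)) ζ') ≠ 0 := by
  have hl : 1 ≤ lag A C := aux_lag_pos hn A C hobs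
  set B : Matrix (Fin n) (Fin n') ℝ := Matrix.of fun i j => ζ i * C' 0 j with hB
  set Ab : Matrix (Fin n ⊕ Fin n') (Fin n ⊕ Fin n') ℝ := Matrix.fromBlocks A B 0 A' with hAb
  set v : Fin n ⊕ Fin n' → ℝ := Sum.elim (fun _ => (0 : ℝ)) ζ' with hv
  set s : ℕ → ℝ := fun k => ((C' * A' ^ k).mulVec ζ') 0 with hs
  have hBmul : ∀ (w : Fin n' → ℝ), B *ᵥ w = ((C' *ᵥ w) 0) • ζ := by
    intro w
    funext r
    simp only [Matrix.mulVec, dotProduct, Pi.smul_apply, smul_eq_mul, hB,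
      Matrix.of_apply]
    rw [Finset.sum_mul]
    apply Finset.sum_congr rfl
    intro j _
    ring
  have hBA : ∀ i, B *ᵥ ((A' ^ i) *ᵥ ζ') = s i • ζ := by
    intro i
    rw [hBmul, Matrix.mulVec_mulVec]
  have key : ∀ i, (Ab ^ i) *ᵥ v =
      Sum.elim (∑ j ∈ Finset.range i, s j • ((A ^ (i - 1 - j)) *ᵥ ζ)) ((A' ^ i) *ᵥ ζ') := by
    intro i
    induction i with
    | zero =>
      simp only [pow_zero, Matrix.one_mulVec, Finset.range_zero, Finset.sum_empty]
      rfl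
    | succ i ih =>
      rw [pow_succ', ← Matrix.mulVec_mulVec, ih, hAb, Matrix.fromBlocks_mulVec]
      simp only [Sum.elim_comp_inl, Sum.elim_comp_inr]
      rw [aux_mulVec_sum, hBA, Finset.sum_range_succ]
      refine congrArg₂ Sum.elim ?_ ?_
      · congr 1
        · apply Finset.sum_congr rfl
          intro j hj
          rw [Finset.mem_range] at hj
          have he : i - 1 - j + 1 = i + 1 - 1 - j := by omega
          rw [Matrix.mulVec_smul, Matrix.mulVec_mulVec, ← pow_succ', he]
        · simp
      · rw [Matrix.zero_mulVec, zero_add, Matrix.mulVec_mulVec, ← pow_succ']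
  have formula : ∀ i,
      (Matrix.fromCols C (0 : Matrix (Fin p) (Fin n') ℝ) * Ab ^ i) *ᵥ v =
      ∑ j ∈ Finset.range i, s j • ((C * A ^ (i - 1 - j)) *ᵥ ζ) := by
    intro i
    rw [← Matrix.mulVec_mulVec, key i, Matrix.fromCols_mulVec_sumElim,
      Matrix.zero_mulVec, add_zero, aux_mulVec_sum]
    apply Finset.sum_congr rfl
    intro j _
    rw [Matrix.mulVec_smul, Matrix.mulVec_mulVec]
  have hsz : ∀ j, j + 2 ≤ n' → s j = 0 := by
    intro j hj
    simp [hs, hz1' j hj]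
  constructor
  · intro i hi
    rw [formula i]
    apply Finset.sum_eq_zero
    intro j hj
    rw [Finset.mem_range] at hj
    by_cases hjn : j + 2 ≤ n'
    · rw [hsz j hjn, zero_smul]
    · have h2 : (i - 1 - j) + 2 ≤ lag A C := by omega
      rw [hz1 _ h2, smul_zero]
  · rw [formula]
    have hsum : ∑ j ∈ Finset.range (lag A C + n' - 1), s j • ((C * A ^ (lag A C + n' - 1 - 1 - j)) *ᵥ ζ)
        = s (n' - 1) • ((C * A ^ (lag A C - 1)) *ᵥ ζ) := by
      rw [Finset.sum_eq_single (n' - 1)]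
      · have he : lag A C + n' - 1 - 1 - (n' - 1) = lag A C - 1 := by omega
        rw [he]
      · intro j hj hne
        rw [Finset.mem_range] at hj
        by_cases hjn : j + 2 ≤ n'
        · rw [hsz j hjn, zero_smul]
        · have h2 : (lag A C + n' - 1 - 1 - j) + 2 ≤ lag A C := by omega
          rw [hz1 _ h2, smul_zero]
      · intro h
        exact absurd (Finset.mem_range.mpr (by omega)) h
    rw [hsum]
    have hs0 : s (n' - 1) ≠ 0 := by
      intro h
      apply hz2'
      funext x
      rw [Fin.eq_zero x]
      exact h
    exact smul_ne_zero hs0 hz2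
end
end

section
/- Suppose two observable systems (A_1,B_1,C_1,D_1) and (A_2,B_2,C_2,D_2), both with n states and lag ℓ, explain the same length-T data (u,y) with T ≥ ℓ+1, via states x^1, x^2 respectively, and suppose the state-input matrix J_ℓ(x^1) = [x^1_{[0,T−ℓ−1]}; H_ℓ(u)] has full row rank. Then the two systems are isomorphic: D_1 = D_2 and there is an invertible S ∈ ℝ^{n×n} with A_1 = S^{-1} A_2 S, B_1 = S^{-1} B_2, C_1 = C_2 S. -/
open Matrix
noncomputable section

namespace S13

open LinearMap Module

section obs

variable {ι : Type*} [Fintype ι] [DecidableEq ι] {p : ℕ}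

lemma obsMat_mulVec {A : Matrix ι ι ℝ} {C : Matrix (Fin p) ι ℝ} {k : ℕ}
    (v : ι → ℝ) (i : Fin (k+1)) (r : Fin p) :
    (obsMat A C k).mulVec v (i, r) = (C * A ^ (i:ℕ)).mulVec v r := rfl

lemma mulVec_obsMat_eq_zero_iff {A : Matrix ι ι ℝ} {C : Matrix (Fin p) ι ℝ} {k : ℕ}
    {v : ι → ℝ} :
    (obsMat A C k).mulVec v = 0 ↔ ∀ i : ℕ, i ≤ k → (C * A ^ i).mulVec v = 0 := by
  constructor
  · intro h i hi
    funext r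
    have := congr_fun h (⟨i, by omega⟩, r)
    simpa [obsMat_mulVec] using this
  · intro h
    funext ir
    obtain ⟨⟨i, hi⟩, r⟩ := ir
    have := congr_fun (h i (by omega)) r
    simpa [obsMat_mulVec] using this

/-- `Kf A C 0 = ⊤`, `Kf A C (k+1) = ker Ω_k`. -/
def Kf (A : Matrix ι ι ℝ) (C : Matrix (Fin p) ι ℝ) : ℕ → Submodule ℝ (ι → ℝ)
  | 0 => ⊤
  | k + 1 => LinearMap.ker (obsMat A C k).mulVecLin

lemma mem_Kf_succ {A : Matrix ι ι ℝ} {C : Matrix (Fin p) ι ℝ} {k : ℕ} {v : ι → ℝ} :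
    v ∈ Kf A C (k+1) ↔ ∀ i : ℕ, i ≤ k → (C * A ^ i).mulVec v = 0 := by
  rw [Kf, LinearMap.mem_ker, Matrix.mulVecLin_apply]
  exact mulVec_obsMat_eq_zero_iff

lemma Kf_antitone (A : Matrix ι ι ℝ) (C : Matrix (Fin p) ι ℝ) (k : ℕ) :
    Kf A C (k+1) ≤ Kf A C k := by
  cases k with
  | zero => exact le_top
  | succ k =>
    intro v hv
    rw [mem_Kf_succ] at hv ⊢
    exact fun i hi => hv i (by omega)

lemma obsRank_add_finrank_Kf (A : Matrix ι ι ℝ) (C : Matrix (Fin p) ι ℝ) (k : ℕ) :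
    obsRank A C k + finrank ℝ (Kf A C k) = Fintype.card ι := by
  cases k with
  | zero =>
    simp [obsRank, Kf, finrank_top, Module.finrank_fintype_fun_eq_card]
    exact (LinearEquiv.ofTop _ rfl).finrank_eq.trans (Module.finrank_fintype_fun_eq_card ℝ)
  | succ k =>
    have h := LinearMap.finrank_range_add_finrank_ker (obsMat A C k).mulVecLin
    rw [Module.finrank_fintype_fun_eq_card] at h
    exact h

lemma obsRank_le (A : Matrix ι ι ℝ) (C : Matrix (Fin p) ι ℝ) (k : ℕ) :
    obsRank A C k ≤ Fintype.card ι := by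
  have := obsRank_add_finrank_Kf A C k; omega

lemma obsRank_mono (A : Matrix ι ι ℝ) (C : Matrix (Fin p) ι ℝ) (k : ℕ) :
    obsRank A C k ≤ obsRank A C (k+1) := by
  have h1 := obsRank_add_finrank_Kf A C k
  have h2 := obsRank_add_finrank_Kf A C (k+1)
  have h3 : finrank ℝ (Kf A C (k+1)) ≤ finrank ℝ (Kf A C k) :=
    Submodule.finrank_mono (Kf_antitone A C k)
  omega

lemma Kf_stab (A : Matrix ι ι ℝ) (C : Matrix (Fin p) ι ℝ) (k : ℕ)
    (h : Kf A C (k+1) = Kf A C k) : Kf A C (k+2) = Kf A C (k+1) := by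
  refine le_antisymm (Kf_antitone A C (k+1)) ?_
  intro v hv
  rw [mem_Kf_succ] at hv ⊢
  intro i hi
  rcases Nat.lt_or_ge i (k+1) with h' | h'
  · exact hv i (by omega)
  · have hi' : i = k + 1 := by omega
    subst hi'
    have hAv : A.mulVec v ∈ Kf A C k := by
      cases k with
      | zero => trivial
      | succ k' =>
        rw [mem_Kf_succ]
        intro i' hi'
        rw [Matrix.mulVec_mulVec, Matrix.mul_assoc, ← pow_succ]
        exact hv (i'+1) (by omega)
    rw [← h, mem_Kf_succ] at hAv
    have hk := hAv k (le_refl k)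
    rw [Matrix.mulVec_mulVec, Matrix.mul_assoc, ← pow_succ] at hk
    exact hk

lemma Kf_stab_all (A : Matrix ι ι ℝ) (C : Matrix (Fin p) ι ℝ) (k : ℕ)
    (h : Kf A C (k+1) = Kf A C k) : ∀ j, Kf A C (k+j+1) = Kf A C (k+j) := by
  intro j
  induction j with
  | zero => exact h
  | succ j ih => exact Kf_stab A C (k+j) ih

lemma obsRank_stab (A : Matrix ι ι ℝ) (C : Matrix (Fin p) ι ℝ) (k : ℕ)
    (h : obsRank A C (k+1) = obsRank A C k) :
    ∀ j, obsRank A C (k+j) = obsRank A C k := by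
  have hk : Kf A C (k+1) = Kf A C k := by
    apply Submodule.eq_of_le_of_finrank_le (Kf_antitone A C k)
    have h1 := obsRank_add_finrank_Kf A C k
    have h2 := obsRank_add_finrank_Kf A C (k+1)
    omega
  intro j
  induction j with
  | zero => rfl
  | succ j ih =>
    have hst := Kf_stab_all A C k hk j
    have e1 := obsRank_add_finrank_Kf A C (k+j+1)
    have e2 := obsRank_add_finrank_Kf A C (k+j)
    rw [hst] at e1
    show obsRank A C (k+j+1) = obsRank A C k
    omega

lemma obsRank_lag (A : Matrix ι ι ℝ) (C : Matrix (Fin p) ι ℝ) (hobs : Observable A C) :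
    obsRank A C (lag A C) = Fintype.card ι := by
  have hobs' : obsRank A C (Fintype.card ι) = Fintype.card ι := hobs
  have hmem : Fintype.card ι ∈ {k | obsRank A C (k+1) = obsRank A C k} := by
    have h1 := obsRank_mono A C (Fintype.card ι)
    have h2 := obsRank_le A C (Fintype.card ι + 1)
    simp only [Set.mem_setOf_eq]
    omega
  have hne : {k | obsRank A C (k+1) = obsRank A C k}.Nonempty := ⟨_, hmem⟩
  have hLmem : obsRank A C (lag A C + 1) = obsRank A C (lag A C) := by
    have := Nat.sInf_mem hne
    simpa [lag, Set.mem_setOf_eq] using this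
  have hgrow : ∀ k, k ≤ lag A C → k ≤ obsRank A C k := by
    intro k hk
    induction k with
    | zero => omega
    | succ k ih =>
      have hk' : k ∉ {k | obsRank A C (k+1) = obsRank A C k} := by
        apply Nat.notMem_of_lt_sInf
        simpa [lag] using hk
      have h1 := obsRank_mono A C k
      have h2 := ih (by omega)
      simp only [Set.mem_setOf_eq] at hk'
      omega
  have hLle : lag A C ≤ Fintype.card ι := by
    by_contra hlt
    have hg := hgrow (Fintype.card ι + 1) (by omega)
    have hl := obsRank_le A C (Fintype.card ι + 1)
    omega
  have hstab := obsRank_stab A C (lag A C) hLmem (Fintype.card ι - lag A C)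
  rw [show lag A C + (Fintype.card ι - lag A C) = Fintype.card ι by omega] at hstab
  omega

lemma ker_obsMat_eq_bot {A : Matrix ι ι ℝ} {C : Matrix (Fin p) ι ℝ} {k : ℕ}
    (h : (obsMat A C k).rank = Fintype.card ι) :
    LinearMap.ker (obsMat A C k).mulVecLin = ⊥ := by
  have h1 := obsRank_add_finrank_Kf A C (k+1)
  have h2 : obsRank A C (k+1) = Fintype.card ι := h
  have h0 : finrank ℝ (Kf A C (k+1)) = 0 := by omega
  have := Submodule.finrank_eq_zero.mp h0
  exact this

end obs

/-! ### Padded (totalized) signals -/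

def pad {T : ℕ} {α : Type*} [Zero α] (f : Fin T → α) (t : ℕ) : α :=
  if h : t < T then f ⟨t, h⟩ else 0

lemma pad_eq {T : ℕ} {α : Type*} [Zero α] (f : Fin T → α) {t : ℕ} (h : t < T) :
    pad f t = f ⟨t, h⟩ := dif_pos h

lemma mulVec_finset_sum {a b : Type*} [Fintype b] (M : Matrix a b ℝ)
    {γ : Type*} (s : Finset γ) (f : γ → b → ℝ) :
    M.mulVec (∑ j ∈ s, f j) = ∑ j ∈ s, M.mulVec (f j) := by
  rw [← Matrix.mulVecLin_apply, map_sum]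
  simp [Matrix.mulVecLin_apply]

lemma mulVec_apply {X Y : Type*} [Fintype Y] (M : Matrix X Y ℝ) (v : Y → ℝ) (i : X) :
    M.mulVec v i = ∑ q, M i q * v q := rfl

lemma matrix_ext_mulVec {X Y : Type*} [Fintype Y] [DecidableEq Y]
    {M N : Matrix X Y ℝ} (h : ∀ v, M.mulVec v = N.mulVec v) : M = N := by
  have h1 : Matrix.toLin' M = Matrix.toLin' N :=
    LinearMap.ext fun v => by simpa [Matrix.toLin'_apply] using h v
  have h2 := congrArg LinearMap.toMatrix' h1
  simpa [LinearMap.toMatrix'_toLin'] using h2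

section explains

variable {ι : Type*} [Fintype ι] [DecidableEq ι] {m p T : ℕ}
  {A : Matrix ι ι ℝ} {B : Matrix ι (Fin m) ℝ} {C : Matrix (Fin p) ι ℝ}
  {D : Matrix (Fin p) (Fin m) ℝ}
  {u : Fin T → Fin m → ℝ} {y : Fin T → Fin p → ℝ} {x : Fin (T+1) → ι → ℝ}

lemma pad_step (hE : Explains A B C D u y x) {t : ℕ} (ht : t < T) :
    pad x (t+1) = A.mulVec (pad x t) + B.mulVec (pad u t) := by
  have h := (hE ⟨t, ht⟩).1
  rw [pad_eq x (show t+1 < T+1 by omega), pad_eq x (show t < T+1 by omega), pad_eq u ht]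
  simpa [Fin.succ_mk, Fin.castSucc_mk] using h

lemma pad_out (hE : Explains A B C D u y x) {t : ℕ} (ht : t < T) :
    pad y t = C.mulVec (pad x t) + D.mulVec (pad u t) := by
  have h := (hE ⟨t, ht⟩).2
  rw [pad_eq y ht, pad_eq x (show t < T+1 by omega), pad_eq u ht]
  simpa [Fin.castSucc_mk] using h

lemma pad_state_window (hE : Explains A B C D u y x) (t : ℕ) :
    ∀ i : ℕ, t + i ≤ T →
    pad x (t+i) = (A^i).mulVec (pad x t) +
      ∑ j ∈ Finset.range i, (A^(i-1-j) * B).mulVec (pad u (t+j)) := by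
  intro i
  induction i with
  | zero => intro _; simp
  | succ i ih =>
    intro h
    have hstep := pad_step hE (show t+i < T by omega)
    rw [show t+(i+1) = (t+i)+1 from rfl, hstep, ih (by omega)]
    rw [Matrix.mulVec_add, Matrix.mulVec_mulVec, ← pow_succ']
    rw [mulVec_finset_sum]
    have hsum : ∀ j ∈ Finset.range i,
        A.mulVec ((A^(i-1-j) * B).mulVec (pad u (t+j)))
        = (A^(i-j) * B).mulVec (pad u (t+j)) := by
      intro j hj
      have hj' := Finset.mem_range.mp hj
      rw [Matrix.mulVec_mulVec, ← Matrix.mul_assoc, ← pow_succ']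
      rw [show i-1-j+1 = i-j by omega]
    rw [Finset.sum_congr rfl hsum]
    rw [Finset.sum_range_succ]
    rw [show i+1-1 = i by omega, Nat.sub_self, pow_zero, Matrix.one_mul]
    abel

lemma pad_output_window (hE : Explains A B C D u y x) (t i : ℕ) (h : t + i < T) :
    pad y (t+i) = (C*A^i).mulVec (pad x t)
      + ∑ j ∈ Finset.range i, (C*A^(i-1-j)*B).mulVec (pad u (t+j))
      + D.mulVec (pad u (t+i)) := by
  have hout := pad_out hE (show t+i < T from h)
  rw [hout, pad_state_window hE t i (by omega), Matrix.mulVec_add, Matrix.mulVec_mulVec,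
    mulVec_finset_sum]
  have hcongr : ∀ j ∈ Finset.range i,
      C.mulVec ((A^(i-1-j) * B).mulVec (pad u (t+j)))
      = (C*A^(i-1-j)*B).mulVec (pad u (t+j)) := by
    intro j hj
    rw [Matrix.mulVec_mulVec, ← Matrix.mul_assoc]
  rw [Finset.sum_congr rfl hcongr]

end explains

/-! ### Full row rank kills relations -/

lemma kill {n m T L : ℕ} (u : Fin T → Fin m → ℝ) (x : Fin (T+1) → Fin n → ℝ)
    (hfull : (Jmat u x L).rank = n + (L+1)*m)
    (a : Fin n → ℝ) (b : Fin (L+1) × Fin m → ℝ)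
    (hrel : ∀ j : Fin (T - L),
      (∑ i, a i * pad x (j:ℕ) i) +
      ∑ kb : Fin (L+1) × Fin m, b kb * pad u ((kb.1:ℕ) + (j:ℕ)) kb.2 = 0) :
    a = 0 ∧ b = 0 := by
  set J := Jmat u x L with hJ
  set v : (Fin n ⊕ Fin (L+1) × Fin m) → ℝ := Sum.elim a b with hv
  have hvJ : Jᵀ.mulVec v = 0 := by
    rw [Matrix.mulVec_transpose]
    funext j
    have hj := hrel j
    have e1 : (v ᵥ* J) j = (∑ i, a i * pad x (j:ℕ) i)
        + ∑ kb : Fin (L+1) × Fin m, b kb * pad u ((kb.1:ℕ) + (j:ℕ)) kb.2 := by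
      simp only [Matrix.vecMul, dotProduct, hJ, hv]
      rw [Fintype.sum_sum_type]
      congr 1
      · apply Finset.sum_congr rfl; intro i _
        rw [pad_eq x (show (j:ℕ) < T+1 by have := j.isLt; omega)]
        simp [Jmat]
      · apply Finset.sum_congr rfl; intro kb _
        rw [pad_eq u (show (kb.1:ℕ) + (j:ℕ) < T by
          have := j.isLt; have := kb.1.isLt; omega)]
        simp [Jmat, hankel]
    exact e1.trans hj
  have hcard2 : Fintype.card (Fin n ⊕ Fin (L+1) × Fin m) = n + (L+1)*m := by simp
  have hrn := LinearMap.finrank_range_add_finrank_ker (Jᵀ).mulVecLin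
  rw [Module.finrank_fintype_fun_eq_card, hcard2] at hrn
  have hrk : (Jᵀ).rank = n + (L+1)*m := by rw [Matrix.rank_transpose]; exact hfull
  have hrkdef : (Jᵀ).rank = finrank ℝ (LinearMap.range (Jᵀ).mulVecLin) := rfl
  have hker : LinearMap.ker (Jᵀ).mulVecLin = ⊥ := by
    have h0 : finrank ℝ (LinearMap.ker (Jᵀ).mulVecLin) = 0 := by omega
    exact Submodule.finrank_eq_zero.mp h0
  have hv0 : v = 0 := by
    have hm : v ∈ LinearMap.ker (Jᵀ).mulVecLin := by
      rw [LinearMap.mem_ker, Matrix.mulVecLin_apply]; exact hvJ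
    rw [hker] at hm
    simpa using hm
  constructor
  · funext i; exact congr_fun hv0 (Sum.inl i)
  · funext kb; exact congr_fun hv0 (Sum.inr kb)

end S13
theorem stmt13 {n m p T ℓ : ℕ}
    (A₁ A₂ : Matrix (Fin n) (Fin n) ℝ) (B₁ B₂ : Matrix (Fin n) (Fin m) ℝ)
    (C₁ C₂ : Matrix (Fin p) (Fin n) ℝ) (D₁ D₂ : Matrix (Fin p) (Fin m) ℝ)
    (u : Fin T → Fin m → ℝ) (y : Fin T → Fin p → ℝ)
    (x₁ x₂ : Fin (T + 1) → Fin n → ℝ)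
    (hE1 : Explains A₁ B₁ C₁ D₁ u y x₁) (hE2 : Explains A₂ B₂ C₂ D₂ u y x₂)
    (hobs1 : Observable A₁ C₁) (hobs2 : Observable A₂ C₂)
    (hl1 : lag A₁ C₁ = ℓ) (hl2 : lag A₂ C₂ = ℓ)
    (hT : ℓ + 1 ≤ T)
    (hfull : (Jmat u x₁ ℓ).rank = n + (ℓ + 1) * m) :
    D₁ = D₂ ∧ ∃ S : Matrix (Fin n) (Fin n) ℝ, IsUnit S ∧
      A₁ = S⁻¹ * A₂ * S ∧ B₁ = S⁻¹ * B₂ ∧ C₁ = C₂ * S := by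
  have hcard : Fintype.card (Fin n) = n := Fintype.card_fin n
  have hR1 : obsRank A₁ C₁ ℓ = n := by
    have h := S13.obsRank_lag A₁ C₁ hobs1
    rw [hl1, hcard] at h
    exact h
  have hR2 : obsRank A₂ C₂ ℓ = n := by
    have h := S13.obsRank_lag A₂ C₂ hobs2
    rw [hl2, hcard] at h
    exact h
  cases ℓ with
  | zero =>
    have hn : n = 0 := by simpa [obsRank] using hR1.symm
    subst hn
    have hD : D₁ = D₂ := by
      have hrow : ∀ r : Fin p,
          (fun kb : Fin 1 × Fin m => (D₁ - D₂) r kb.2) = 0 := by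
        intro r
        refine (S13.kill u x₁ hfull (fun i => i.elim0)
          (fun kb => (D₁ - D₂) r kb.2) ?_).2
        intro j
        have ht : (j:ℕ) < T := by have := j.isLt; omega
        have h1 := S13.pad_out hE1 ht
        have h2 := S13.pad_out hE2 ht
        have hz1 : C₁.mulVec (S13.pad x₁ (j:ℕ)) = 0 := by
          funext r'; simp [Matrix.mulVec, dotProduct]
        have hz2 : C₂.mulVec (S13.pad x₂ (j:ℕ)) = 0 := by
          funext r'; simp [Matrix.mulVec, dotProduct]
        rw [hz1, zero_add] at h1
        rw [hz2, zero_add] at h2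
        have hDu : D₁.mulVec (S13.pad u (j:ℕ)) = D₂.mulVec (S13.pad u (j:ℕ)) :=
          h1.symm.trans h2
        have hs0 : (∑ i : Fin 0, (i.elim0 : ℝ) * S13.pad x₁ (j:ℕ) i) = 0 := by simp
        rw [hs0, zero_add, Fintype.sum_prod_type, Fin.sum_univ_one]
        have : (∑ aa : Fin m, (D₁ - D₂) r aa
            * S13.pad u (((0 : Fin 1):ℕ) + (j:ℕ)) aa)
            = ((D₁ - D₂).mulVec (S13.pad u (j:ℕ))) r := by
          rw [S13.mulVec_apply]
          refine Finset.sum_congr rfl fun aa _ => ?_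
          norm_num
        rw [this, Matrix.sub_mulVec, hDu, sub_self]
        rfl
      ext r c
      have h := congr_fun (hrow r) ((0 : Fin 1), c)
      simp only [Pi.zero_apply, Matrix.sub_apply] at h
      linarith
    refine ⟨hD, 1, isUnit_one, ?_, ?_, ?_⟩
    · ext i j; exact i.elim0
    · ext i j; exact i.elim0
    · ext i j; exact j.elim0
  | succ l =>
    have hker1 : LinearMap.ker (obsMat A₁ C₁ l).mulVecLin = ⊥ := by
      apply S13.ker_obsMat_eq_bot
      rw [hcard]; exact hR1
    have hker2 : LinearMap.ker (obsMat A₂ C₂ l).mulVecLin = ⊥ := by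
      apply S13.ker_obsMat_eq_bot
      rw [hcard]; exact hR2
    obtain ⟨L, hL⟩ :=
      LinearMap.exists_leftInverse_of_injective (obsMat A₂ C₂ l).mulVecLin hker2
    have hLid : ∀ v : Fin n → ℝ, L ((obsMat A₂ C₂ l).mulVec v) = v := by
      intro v
      have h := LinearMap.ext_iff.mp hL v
      simpa using h
    set S' : (Fin n → ℝ) →ₗ[ℝ] (Fin n → ℝ) := L ∘ₗ (obsMat A₁ C₁ l).mulVecLin with hS'def
    set Dm : Matrix (Fin (l+1) × Fin p) (Fin (l+1) × Fin m) ℝ :=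
      Matrix.of (fun ir ja =>
        (if (ja.1:ℕ) < (ir.1:ℕ) then
            C₁*A₁^((ir.1:ℕ)-1-(ja.1:ℕ))*B₁ - C₂*A₂^((ir.1:ℕ)-1-(ja.1:ℕ))*B₂
         else if (ja.1:ℕ) = (ir.1:ℕ) then D₁ - D₂ else 0) ir.2 ja.2) with hDmdef
    set G' : (Fin (l+1) × Fin m → ℝ) →ₗ[ℝ] (Fin n → ℝ) := L ∘ₗ Dm.mulVecLin with hG'def
    set uwin : ℕ → Fin (l+1) × Fin m → ℝ :=
      fun t ja => S13.pad u (t + (ja.1:ℕ)) ja.2 with huwin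
    have hwin : ∀ t : ℕ, t + l < T →
        (obsMat A₂ C₂ l).mulVec (S13.pad x₂ t)
        = (obsMat A₁ C₁ l).mulVec (S13.pad x₁ t) + Dm.mulVec (uwin t) := by
      intro t ht
      funext ir
      obtain ⟨i, r⟩ := ir
      have hti : t + (i:ℕ) < T := by have := i.isLt; omega
      have h1 := S13.pad_output_window hE1 t (i:ℕ) hti
      have h2 := S13.pad_output_window hE2 t (i:ℕ) hti
      have heq := h1.symm.trans h2
      have hs : (∑ j ∈ Finset.range (i:ℕ),
            (C₁*A₁^((i:ℕ)-1-j)*B₁ - C₂*A₂^((i:ℕ)-1-j)*B₂).mulVec (S13.pad u (t+j)))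
          = (∑ j ∈ Finset.range (i:ℕ), (C₁*A₁^((i:ℕ)-1-j)*B₁).mulVec (S13.pad u (t+j)))
          - ∑ j ∈ Finset.range (i:ℕ), (C₂*A₂^((i:ℕ)-1-j)*B₂).mulVec (S13.pad u (t+j)) := by
        rw [← Finset.sum_sub_distrib]
        exact Finset.sum_congr rfl fun j _ => Matrix.sub_mulVec _ _ _
      have hvec : (C₂*A₂^(i:ℕ)).mulVec (S13.pad x₂ t)
          = (C₁*A₁^(i:ℕ)).mulVec (S13.pad x₁ t)
          + (∑ j ∈ Finset.range (i:ℕ),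
              (C₁*A₁^((i:ℕ)-1-j)*B₁ - C₂*A₂^((i:ℕ)-1-j)*B₂).mulVec (S13.pad u (t+j)))
          + (D₁ - D₂).mulVec (S13.pad u (t+(i:ℕ))) := by
        rw [hs, Matrix.sub_mulVec]
        calc (C₂*A₂^(i:ℕ)).mulVec (S13.pad x₂ t)
            = ((C₂*A₂^(i:ℕ)).mulVec (S13.pad x₂ t)
              + (∑ j ∈ Finset.range (i:ℕ), (C₂*A₂^((i:ℕ)-1-j)*B₂).mulVec (S13.pad u (t+j)))
              + D₂.mulVec (S13.pad u (t+(i:ℕ))))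
              - (∑ j ∈ Finset.range (i:ℕ), (C₂*A₂^((i:ℕ)-1-j)*B₂).mulVec (S13.pad u (t+j)))
              - D₂.mulVec (S13.pad u (t+(i:ℕ))) := by abel
          _ = ((C₁*A₁^(i:ℕ)).mulVec (S13.pad x₁ t)
              + (∑ j ∈ Finset.range (i:ℕ), (C₁*A₁^((i:ℕ)-1-j)*B₁).mulVec (S13.pad u (t+j)))
              + D₁.mulVec (S13.pad u (t+(i:ℕ))))
              - (∑ j ∈ Finset.range (i:ℕ), (C₂*A₂^((i:ℕ)-1-j)*B₂).mulVec (S13.pad u (t+j)))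
              - D₂.mulVec (S13.pad u (t+(i:ℕ))) := by rw [← heq]
          _ = _ := by abel
      set F : ℕ → ℝ := fun kk =>
        ((if kk < (i:ℕ) then C₁*A₁^((i:ℕ)-1-kk)*B₁ - C₂*A₂^((i:ℕ)-1-kk)*B₂
          else if kk = (i:ℕ) then D₁ - D₂ else 0).mulVec (S13.pad u (t+kk))) r with hF
      have hexp : Dm.mulVec (uwin t) (i, r) = ∑ k : Fin (l+1), F (k:ℕ) := by
        rw [S13.mulVec_apply, Fintype.sum_prod_type]
        refine Finset.sum_congr rfl fun k _ => ?_
        simp only [hF, S13.mulVec_apply]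
        refine Finset.sum_congr rfl fun aa _ => ?_
        simp only [hDmdef, huwin, Matrix.of_apply]
      have hsubset : Finset.range ((i:ℕ)+1) ⊆ Finset.range (l+1) :=
        Finset.range_subset_range.mpr (by have := i.isLt; omega)
      have hvanish : ∀ k ∈ Finset.range (l+1), k ∉ Finset.range ((i:ℕ)+1) → F k = 0 := by
        intro k hk hk'
        rw [Finset.mem_range] at hk
        rw [Finset.mem_range] at hk'
        simp only [hF]
        rw [if_neg (by omega), if_neg (by omega)]
        simp
      have hDterm : Dm.mulVec (uwin t) (i, r)
          = (∑ j ∈ Finset.range (i:ℕ),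
              (C₁*A₁^((i:ℕ)-1-j)*B₁ - C₂*A₂^((i:ℕ)-1-j)*B₂).mulVec (S13.pad u (t+j))) r
            + ((D₁ - D₂).mulVec (S13.pad u (t+(i:ℕ)))) r := by
        calc Dm.mulVec (uwin t) (i, r) = ∑ k : Fin (l+1), F (k:ℕ) := hexp
          _ = ∑ k ∈ Finset.range (l+1), F k := Fin.sum_univ_eq_sum_range F (l+1)
          _ = ∑ k ∈ Finset.range ((i:ℕ)+1), F k :=
              (Finset.sum_subset hsubset hvanish).symm
          _ = (∑ k ∈ Finset.range (i:ℕ), F k) + F (i:ℕ) := Finset.sum_range_succ F (i:ℕ)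
          _ = _ := by
              congr 1
              · rw [Finset.sum_apply]
                refine Finset.sum_congr rfl fun k hk => ?_
                simp only [hF]
                rw [if_pos (Finset.mem_range.mp hk)]
              · simp only [hF]
                norm_num
      have hcomp := congr_fun hvec r
      simp only [Pi.add_apply] at hcomp
      show (obsMat A₂ C₂ l).mulVec (S13.pad x₂ t) (i, r)
          = ((obsMat A₁ C₁ l).mulVec (S13.pad x₁ t)) (i, r) + Dm.mulVec (uwin t) (i, r)
      rw [S13.obsMat_mulVec, S13.obsMat_mulVec, hDterm, hcomp]
      ring
    have keyx : ∀ t : ℕ, t + l < T → S13.pad x₂ t = S' (S13.pad x₁ t) + G' (uwin t) := by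
      intro t ht
      have h := congrArg L (hwin t ht)
      rw [map_add, hLid] at h
      rw [h]
      simp only [hS'def, hG'def, LinearMap.comp_apply, Matrix.mulVecLin_apply]
    set firstL : (Fin (l+2) × Fin m → ℝ) →ₗ[ℝ] (Fin m → ℝ) :=
      { toFun := fun w a => w (0, a)
        map_add' := fun _ _ => rfl
        map_smul' := fun _ _ => rfl } with hfirst
    set shiftLo : (Fin (l+2) × Fin m → ℝ) →ₗ[ℝ] (Fin (l+1) × Fin m → ℝ) :=
      { toFun := fun w ja => w (ja.1.castSucc, ja.2)
        map_add' := fun _ _ => rfl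
        map_smul' := fun _ _ => rfl } with hlo
    set shiftHi : (Fin (l+2) × Fin m → ℝ) →ₗ[ℝ] (Fin (l+1) × Fin m → ℝ) :=
      { toFun := fun w ja => w (ja.1.succ, ja.2)
        map_add' := fun _ _ => rfl
        map_smul' := fun _ _ => rfl } with hhi
    set Q' : (Fin (l+2) × Fin m → ℝ) →ₗ[ℝ] (Fin n → ℝ) :=
      S' ∘ₗ B₁.mulVecLin ∘ₗ firstL + G' ∘ₗ shiftHi
        - A₂.mulVecLin ∘ₗ G' ∘ₗ shiftLo - B₂.mulVecLin ∘ₗ firstL with hQ'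
    set S : Matrix (Fin n) (Fin n) ℝ := LinearMap.toMatrix' S' with hSmat
    set Q : Matrix (Fin n) (Fin (l+2) × Fin m) ℝ := LinearMap.toMatrix' Q' with hQmat
    have hSval : ∀ v, S.mulVec v = S' v := by
      intro v
      rw [hSmat, ← Matrix.toLin'_apply, Matrix.toLin'_toMatrix']
    have hQval : ∀ w, Q.mulVec w = Q' w := by
      intro w
      rw [hQmat, ← Matrix.toLin'_apply, Matrix.toLin'_toMatrix']
    set uwin1 : ℕ → Fin (l+2) × Fin m → ℝ :=
      fun t ja => S13.pad u (t + (ja.1:ℕ)) ja.2 with huwin1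
    have hfw : ∀ t, firstL (uwin1 t) = S13.pad u t := by
      intro t; funext aa
      simp [hfirst, huwin1]
    have hhw : ∀ t, shiftHi (uwin1 t) = uwin (t+1) := by
      intro t; funext ja
      simp only [hhi, huwin1, huwin, LinearMap.coe_mk, AddHom.coe_mk, Fin.val_succ]
      rw [show t + ((ja.1:ℕ)+1) = (t+1) + (ja.1:ℕ) by omega]
    have hlw : ∀ t, shiftLo (uwin1 t) = uwin t := by
      intro t; funext ja
      simp only [hlo, huwin1, huwin, LinearMap.coe_mk, AddHom.coe_mk, Fin.coe_castSucc]
    have hrel1 : ∀ t : ℕ, t + (l+1) < T →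
        (S*A₁ - A₂*S).mulVec (S13.pad x₁ t) + Q.mulVec (uwin1 t) = 0 := by
      intro t ht
      have e1 := S13.pad_step hE1 (show t < T by omega)
      have e2 := S13.pad_step hE2 (show t < T by omega)
      have k1 := keyx t (by omega)
      have k2 := keyx (t+1) (by omega)
      have hQw : Q.mulVec (uwin1 t)
          = S' (B₁.mulVec (S13.pad u t)) + G' (uwin (t+1))
            - A₂.mulVec (G' (uwin t)) - B₂.mulVec (S13.pad u t) := by
        rw [hQval, hQ']
        simp only [LinearMap.sub_apply, LinearMap.add_apply, LinearMap.comp_apply,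
          Matrix.mulVecLin_apply]
        rw [hfw, hhw, hlw]
      have hSA : (S*A₁ - A₂*S).mulVec (S13.pad x₁ t)
          = S' (A₁.mulVec (S13.pad x₁ t)) - A₂.mulVec (S' (S13.pad x₁ t)) := by
        rw [Matrix.sub_mulVec, ← Matrix.mulVec_mulVec, ← Matrix.mulVec_mulVec,
          hSval, hSval]
      have hp1 : S13.pad x₂ (t+1)
          = S' (A₁.mulVec (S13.pad x₁ t)) + S' (B₁.mulVec (S13.pad u t)) + G' (uwin (t+1)) := by
        rw [k2, e1, map_add]
      have hp2 : S13.pad x₂ (t+1)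
          = A₂.mulVec (S' (S13.pad x₁ t)) + A₂.mulVec (G' (uwin t)) + B₂.mulVec (S13.pad u t) := by
        rw [e2, k1, Matrix.mulVec_add]
      rw [hQw, hSA]
      calc S' (A₁.mulVec (S13.pad x₁ t)) - A₂.mulVec (S' (S13.pad x₁ t))
            + (S' (B₁.mulVec (S13.pad u t)) + G' (uwin (t+1))
              - A₂.mulVec (G' (uwin t)) - B₂.mulVec (S13.pad u t))
          = (S' (A₁.mulVec (S13.pad x₁ t)) + S' (B₁.mulVec (S13.pad u t)) + G' (uwin (t+1)))
            - (A₂.mulVec (S' (S13.pad x₁ t)) + A₂.mulVec (G' (uwin t))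
              + B₂.mulVec (S13.pad u t)) := by abel
        _ = S13.pad x₂ (t+1) - S13.pad x₂ (t+1) := by rw [← hp1, ← hp2]
        _ = 0 := sub_self _
    have hkill1 : ∀ i : Fin n, ((S*A₁ - A₂*S) i = 0) ∧ (Q i = 0) := by
      intro i
      apply S13.kill u x₁ hfull ((S*A₁ - A₂*S) i) (Q i)
      intro j
      have hb : (j:ℕ) + (l+1) < T := by have := j.isLt; omega
      have h := congr_fun (hrel1 (j:ℕ) hb) i
      simp only [Pi.add_apply, Pi.zero_apply] at h
      have hA : (∑ q, (S*A₁ - A₂*S) i q * S13.pad x₁ (j:ℕ) q)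
          = (S*A₁ - A₂*S).mulVec (S13.pad x₁ (j:ℕ)) i := (S13.mulVec_apply _ _ _).symm
      have hBs : (∑ kb : Fin (l+2) × Fin m, Q i kb * S13.pad u ((kb.1:ℕ) + (j:ℕ)) kb.2)
          = Q.mulVec (uwin1 (j:ℕ)) i := by
        rw [S13.mulVec_apply]
        refine Finset.sum_congr rfl fun kb _ => ?_
        simp only [huwin1]
        rw [Nat.add_comm (kb.1:ℕ) (j:ℕ)]
      rw [hA, hBs]
      exact h
    have hSA : S*A₁ = A₂*S := by
      have h0 : S*A₁ - A₂*S = 0 := by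
        ext i q
        have := congr_fun (hkill1 i).1 q
        simpa using this
      exact sub_eq_zero.mp h0
    have hQ'0 : Q' = 0 := by
      have h0 : Q = 0 := by
        ext i kb
        have := congr_fun (hkill1 i).2 kb
        simpa using this
      have hq : Q' = Matrix.toLin' Q := by rw [hQmat, Matrix.toLin'_toMatrix']
      rw [hq, h0]
      simp
    have hrel' : ∀ w : Fin (l+2) × Fin m → ℝ,
        G' (shiftHi w) = A₂.mulVec (G' (shiftLo w)) + B₂.mulVec (firstL w)
          - S' (B₁.mulVec (firstL w)) := by
      intro w
      have h : Q' w = 0 := by rw [hQ'0]; simp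
      rw [hQ'] at h
      simp only [LinearMap.sub_apply, LinearMap.add_apply, LinearMap.comp_apply,
        Matrix.mulVecLin_apply] at h
      calc G' (shiftHi w)
          = (S' (B₁.mulVec (firstL w)) + G' (shiftHi w)
            - A₂.mulVec (G' (shiftLo w)) - B₂.mulVec (firstL w))
            + (A₂.mulVec (G' (shiftLo w)) + B₂.mulVec (firstL w)
              - S' (B₁.mulVec (firstL w))) := by abel
        _ = _ := by rw [h, zero_add]
    have hG0 : ∀ w, G' w = 0 := by
      have claim : ∀ d : ℕ, ∀ w : Fin (l+1) × Fin m → ℝ,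
          (∀ ja : Fin (l+1) × Fin m, (ja.1:ℕ) + d < l + 1 → w ja = 0) → G' w = 0 := by
        intro d
        induction d with
        | zero =>
          intro w hw
          have hw0 : w = 0 := by
            funext ja
            exact hw ja (by have := ja.1.isLt; omega)
          rw [hw0, map_zero]
        | succ d ih =>
          intro w hw
          set wt : Fin (l+2) × Fin m → ℝ := fun ja =>
            if h : 0 < (ja.1:ℕ) then
              w (⟨(ja.1:ℕ)-1, by have := ja.1.isLt; omega⟩, ja.2) else 0 with hwt
          have h1 : firstL wt = 0 := by
            funext aa
            simp [hfirst, hwt]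
          have h2 : shiftHi wt = w := by
            funext ja
            simp only [hhi, hwt, LinearMap.coe_mk, AddHom.coe_mk, Fin.val_succ]
            rw [dif_pos (by omega)]
            simp
          have h3 : G' (shiftLo wt) = 0 := by
            apply ih
            intro ja hja
            simp only [hlo, hwt, LinearMap.coe_mk, AddHom.coe_mk, Fin.coe_castSucc]
            by_cases h0 : 0 < (ja.1:ℕ)
            · rw [dif_pos h0]
              apply hw
              simp only []
              omega
            · rw [dif_neg h0]
          have hr := hrel' wt
          rw [h1, h2, h3] at hr
          rw [hr]
          simp
      intro w
      exact claim (l+1) w (fun ja hja => absurd hja (by omega))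
    have hB : S * B₁ = B₂ := by
      apply S13.matrix_ext_mulVec
      intro v
      set w0 : Fin (l+2) × Fin m → ℝ := fun ja => if ja.1 = 0 then v ja.2 else 0 with hw0
      have hf : firstL w0 = v := by
        funext aa; simp [hfirst, hw0]
      have hr := hrel' w0
      rw [hf, hG0, hG0] at hr
      rw [Matrix.mulVec_zero, zero_add] at hr
      have hzz : S' (B₁.mulVec v) = B₂.mulVec v := by
        have h := hr.symm
        exact (sub_eq_zero.mp h).symm
      rw [← Matrix.mulVec_mulVec, hSval, hzz]
    have hrel2 : ∀ t : ℕ, t + (l+1) < T →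
        (C₁ - C₂*S).mulVec (S13.pad x₁ t) + (D₁ - D₂).mulVec (S13.pad u t) = 0 := by
      intro t ht
      have h1 := S13.pad_out hE1 (show t < T by omega)
      have h2 := S13.pad_out hE2 (show t < T by omega)
      have k1 := keyx t (by omega)
      rw [hG0, add_zero] at k1
      rw [k1] at h2
      have hC2 : C₂.mulVec (S' (S13.pad x₁ t)) = (C₂*S).mulVec (S13.pad x₁ t) := by
        rw [← hSval, Matrix.mulVec_mulVec]
      rw [hC2] at h2
      have heq := h1.symm.trans h2
      rw [Matrix.sub_mulVec, Matrix.sub_mulVec]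
      calc C₁.mulVec (S13.pad x₁ t) - (C₂*S).mulVec (S13.pad x₁ t)
            + (D₁.mulVec (S13.pad u t) - D₂.mulVec (S13.pad u t))
          = (C₁.mulVec (S13.pad x₁ t) + D₁.mulVec (S13.pad u t))
            - ((C₂*S).mulVec (S13.pad x₁ t) + D₂.mulVec (S13.pad u t)) := by abel
        _ = 0 := by rw [heq]; exact sub_self _
    have hkill2 : ∀ r : Fin p, ((C₁ - C₂*S) r = 0) ∧
        ((fun kb : Fin (l+2) × Fin m =>
          if (kb.1:ℕ) = 0 then (D₁ - D₂) r kb.2 else 0) = 0) := by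
      intro r
      apply S13.kill u x₁ hfull
      intro j
      have hb : (j:ℕ) + (l+1) < T := by have := j.isLt; omega
      have h := congr_fun (hrel2 (j:ℕ) hb) r
      simp only [Pi.add_apply, Pi.zero_apply] at h
      have hA : (∑ q, (C₁ - C₂*S) r q * S13.pad x₁ (j:ℕ) q)
          = (C₁ - C₂*S).mulVec (S13.pad x₁ (j:ℕ)) r := (S13.mulVec_apply _ _ _).symm
      have hBs : (∑ kb : Fin (l+2) × Fin m,
              (if (kb.1:ℕ) = 0 then (D₁ - D₂) r kb.2 else 0)
                * S13.pad u ((kb.1:ℕ)+(j:ℕ)) kb.2)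
          = (D₁ - D₂).mulVec (S13.pad u (j:ℕ)) r := by
        rw [Fintype.sum_prod_type, Fin.sum_univ_succ]
        have hz : (∑ k : Fin (l+1), ∑ aa : Fin m,
            (if (((k.succ : Fin (l+2))):ℕ) = 0 then (D₁ - D₂) r aa else 0)
              * S13.pad u ((((k.succ : Fin (l+2))):ℕ)+(j:ℕ)) aa) = 0 := by
          apply Finset.sum_eq_zero
          intro k _
          apply Finset.sum_eq_zero
          intro aa _
          rw [if_neg (by simp [Fin.val_succ])]
          ring
        rw [hz, add_zero, S13.mulVec_apply]
        refine Finset.sum_congr rfl fun aa _ => ?_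
        norm_num
      rw [hA, hBs]
      exact h
    have hC : C₁ = C₂ * S := by
      have h0 : C₁ - C₂*S = 0 := by
        ext r q
        have := congr_fun (hkill2 r).1 q
        simpa using this
      exact sub_eq_zero.mp h0
    have hD : D₁ = D₂ := by
      ext r c
      have h := congr_fun (hkill2 r).2 ((0 : Fin (l+2)), c)
      simp at h
      linarith
    have hcomm : ∀ i : ℕ, A₂^i * S = S * A₁^i := by
      intro i
      induction i with
      | zero => simp
      | succ i ih =>
        calc A₂^(i+1) * S = A₂ * (A₂^i * S) := by rw [pow_succ', Matrix.mul_assoc]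
          _ = A₂ * (S * A₁^i) := by rw [ih]
          _ = (A₂ * S) * A₁^i := by rw [Matrix.mul_assoc]
          _ = (S * A₁) * A₁^i := by rw [← hSA]
          _ = S * A₁^(i+1) := by rw [Matrix.mul_assoc, ← pow_succ']
    have hSinj : Function.Injective S.mulVec := by
      have hkerS : ∀ v, S.mulVec v = 0 → v = 0 := by
        intro v hv
        have hOv : (obsMat A₁ C₁ l).mulVec v = 0 := by
          rw [S13.mulVec_obsMat_eq_zero_iff]
          intro i hi
          have hCAi : C₁ * A₁^i = (C₂ * A₂^i) * S := by
            calc C₁ * A₁^i = C₂ * (S * A₁^i) := by rw [hC, Matrix.mul_assoc]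
              _ = C₂ * (A₂^i * S) := by rw [← hcomm]
              _ = (C₂ * A₂^i) * S := by rw [Matrix.mul_assoc]
          rw [hCAi, ← Matrix.mulVec_mulVec, hv, Matrix.mulVec_zero]
        have hm : v ∈ LinearMap.ker (obsMat A₁ C₁ l).mulVecLin := by
          rw [LinearMap.mem_ker, Matrix.mulVecLin_apply]; exact hOv
        rw [hker1] at hm
        simpa using hm
      intro v w hvw
      have hvw0 : S.mulVec (v - w) = 0 := by
        rw [Matrix.mulVec_sub, hvw, sub_self]
      exact sub_eq_zero.mp (hkerS _ hvw0)
    have hU : IsUnit S := Matrix.mulVec_injective_iff_isUnit.mp hSinj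
    have hdet : IsUnit S.det := (Matrix.isUnit_iff_isUnit_det S).mp hU
    refine ⟨hD, S, hU, ?_, ?_, hC⟩
    · calc A₁ = (S⁻¹ * S) * A₁ := by rw [Matrix.nonsing_inv_mul S hdet, Matrix.one_mul]
        _ = S⁻¹ * (S * A₁) := by rw [Matrix.mul_assoc]
        _ = S⁻¹ * (A₂ * S) := by rw [hSA]
        _ = S⁻¹ * A₂ * S := by rw [Matrix.mul_assoc]
    · calc B₁ = (S⁻¹ * S) * B₁ := by rw [Matrix.nonsing_inv_mul S hdet, Matrix.one_mul]
        _ = S⁻¹ * (S * B₁) := by rw [Matrix.mul_assoc]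
        _ = S⁻¹ * B₂ := by rw [hB]
end
end

section
/- Let x_{[0,T]} ∈ ℝ^{n×(T+1)}. There exists a system (A,B,C,D) explaining the data (u,y) with state x (i.e., x_{t+1}=Ax_t+Bu_t and y_t=Cx_t+Du_t for all t ∈ [0,T−1]) if and only if rowspace([x_{[1,T]}; y_{[0,T−1]}]) ⊆ rowspace([x_{[0,T−1]}; u_{[0,T−1]}]). -/
open Matrix
noncomputable section

theorem stmt19 {n m p T : ℕ}
    (u : Fin T → Fin m → ℝ) (y : Fin T → Fin p → ℝ)
    (x : Fin (T + 1) → Fin n → ℝ) :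
    (∃ (A : Matrix (Fin n) (Fin n) ℝ) (B : Matrix (Fin n) (Fin m) ℝ)
       (C : Matrix (Fin p) (Fin n) ℝ) (D : Matrix (Fin p) (Fin m) ℝ),
      Explains A B C D u y x) ↔
    rowSpace (Matrix.fromRows
        (Matrix.of fun i (t : Fin T) => x t.succ i)
        (Matrix.of fun (a : Fin p) (t : Fin T) => y t a)) ≤
      rowSpace (Matrix.fromRows
        (Matrix.of fun i (t : Fin T) => x t.castSucc i)
        (Matrix.of fun (a : Fin m) (t : Fin T) => u t a)) := by
  set N := Matrix.fromRows (Matrix.of fun i (t : Fin T) => x t.castSucc i)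
      (Matrix.of fun (a : Fin m) (t : Fin T) => u t a) with hN
  constructor
  · rintro ⟨A, B, C, D, h⟩
    rw [rowSpace, Submodule.span_le]
    rintro v ⟨i, rfl⟩
    rw [SetLike.mem_coe, rowSpace, Submodule.mem_span_range_iff_exists_fun]
    cases i with
    | inl i =>
      refine ⟨Sum.elim (A i) (B i), funext fun t => ?_⟩
      have hi := congrFun (h t).1 i
      simp [Matrix.mulVec, dotProduct, Fintype.sum_sum_type, Matrix.fromRows, hN] at hi ⊢
      exact hi.symm
    | inr a =>
      refine ⟨Sum.elim (C a) (D a), funext fun t => ?_⟩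
      have hi := congrFun (h t).2 a
      simp [Matrix.mulVec, dotProduct, Fintype.sum_sum_type, Matrix.fromRows, hN] at hi ⊢
      exact hi.symm
  · intro h
    have hx : ∀ i : Fin n, ∃ c : Fin n ⊕ Fin m → ℝ,
        (∑ s, c s • N s) = fun t => x t.succ i := by
      intro i
      have : (fun t => x t.succ i) ∈ rowSpace N :=
        h (Submodule.subset_span ⟨Sum.inl i, rfl⟩)
      rwa [rowSpace, Submodule.mem_span_range_iff_exists_fun] at this
    have hy : ∀ a : Fin p, ∃ c : Fin n ⊕ Fin m → ℝ,
        (∑ s, c s • N s) = fun t => y t a := by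
      intro a
      have : (fun t => y t a) ∈ rowSpace N :=
        h (Submodule.subset_span ⟨Sum.inr a, rfl⟩)
      rwa [rowSpace, Submodule.mem_span_range_iff_exists_fun] at this
    choose cx hcx using hx
    choose cy hcy using hy
    refine ⟨Matrix.of fun i j => cx i (Sum.inl j), Matrix.of fun i a => cx i (Sum.inr a),
      Matrix.of fun a j => cy a (Sum.inl j), Matrix.of fun a b => cy a (Sum.inr b),
      fun t => ⟨?_, ?_⟩⟩
    · funext i
      have h2 := congrFun (hcx i) t
      simp [Matrix.mulVec, dotProduct, Fintype.sum_sum_type, Matrix.fromRows, hN] at h2 ⊢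
      rw [← h2]
      rfl
    · funext a
      have h2 := congrFun (hcy a) t
      simp [Matrix.mulVec, dotProduct, Fintype.sum_sum_type, Matrix.fromRows, hN] at h2 ⊢
      rw [← h2]
      rfl
end
end
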